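/- arXiv:1012.1924 — 4 statements merged into one kernel-verified Lean document; each statement's English description precedes it below -/
import Mathlib

section
/- The bar involution d satisfies: for every y ∈ W, d(H_y) lies in H_y + Σ_{z < y} Z[v,v⁻¹] H_z, where < denotes the Bruhat order. That is, d(H_y) equals H_y plus a Z[v,v⁻¹]-linear combination of H_z with z strictly below y in Bruhat order. -/
open LaurentPolynomial

/-- Membership in `v ℤ[v] ⊆ ℤ[v,v⁻¹]`. -/
def IsVPol (p : LaurentPolynomial ℤ) : Prop :=
  ∃ q : Polynomial ℤ, p = Polynomial.toLaurent q * T 1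

/-- The coefficient of `v` in a Laurent polynomial. -/
def muCoeff (p : LaurentPolynomial ℤ) : ℤ := p.coeff 1

variable {B W : Type*} [Group W] {M : CoxeterMatrix B}

/-- The Bruhat order `≤` on `W`: generated by right multiplication by reflections which
increases the length. -/
def BruhatLE (cs : CoxeterSystem M W) : W → W → Prop :=
  Relation.ReflTransGen
    (fun a b => (∃ t, cs.IsReflection t ∧ b = a * t) ∧ cs.length a < cs.length b)

/-- The strict Bruhat order on `W`. -/
def BruhatLT (cs : CoxeterSystem M W) (x y : W) : Prop :=
  BruhatLE cs x y ∧ x ≠ y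

/-- The Hecke algebra of a Coxeter system, axiomatized: a `ℤ[v,v⁻¹]`-algebra with a basis
`T_x` indexed by `W` satisfying the braid and quadratic relations. -/
structure HeckeAlg (cs : CoxeterSystem M W) (A : Type*) [Ring A]
    [Algebra (LaurentPolynomial ℤ) A] where
  Tb : Module.Basis W (LaurentPolynomial ℤ) A
  Tb_one : Tb 1 = 1
  Tb_mul : ∀ x y : W, cs.length (x * y) = cs.length x + cs.length y →
    Tb x * Tb y = Tb (x * y)
  Tb_quadratic : ∀ i : B, (Tb (cs.simple i) + 1) *
    (Tb (cs.simple i) - algebraMap (LaurentPolynomial ℤ) A (T (-2))) = 0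

namespace HeckeAlg

variable {cs : CoxeterSystem M W} {A : Type*} [Ring A] [Algebra (LaurentPolynomial ℤ) A]

/-- The standard basis element `H_x = v^{ℓ(x)} T_x`. -/
noncomputable def H (ha : HeckeAlg cs A) (x : W) : A :=
  algebraMap (LaurentPolynomial ℤ) A (T (cs.length x : ℤ)) * ha.Tb x

/-- The element `C_s = H_s + v` for a simple reflection `s`. -/
noncomputable def Cs (ha : HeckeAlg cs A) (i : B) : A :=
  ha.H (cs.simple i) + algebraMap (LaurentPolynomial ℤ) A (T 1)

/-- Data of the bar involution `d` on the Hecke algebra: a ring endomorphism with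
`d(v) = v⁻¹` and `d(H_x) = (H_{x⁻¹})⁻¹`. -/
structure Bar (ha : HeckeAlg cs A) where
  d : A →+* A
  d_scalar : ∀ n : ℤ, d (algebraMap (LaurentPolynomial ℤ) A (T n)) =
    algebraMap (LaurentPolynomial ℤ) A (T (-n))
  d_H_mul : ∀ x : W, d (ha.H x) * ha.H x⁻¹ = 1
  d_H_mul' : ∀ x : W, ha.H x⁻¹ * d (ha.H x) = 1

/-- `c` is a Kazhdan–Lusztig basis element at `x`: bar-invariant and congruent to `H_x`
modulo `∑_y v ℤ[v] H_y`. -/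
def IsKL (ha : HeckeAlg cs A) (bar : ha.Bar) (x : W) (c : A) : Prop :=
  bar.d c = c ∧ ∃ f : W →₀ LaurentPolynomial ℤ, (∀ y, IsVPol (f y)) ∧
    c = ha.H x + f.sum fun y r => r • ha.H y

end HeckeAlg

open scoped Classical
open HeckeAlg


namespace BruhatAux

open CoxeterSystem List

variable {B W : Type*} [Group W] {M : CoxeterMatrix B} (cs : CoxeterSystem M W)

local prefix:100 "σ" => cs.simple
local prefix:100 "π" => cs.wordProd
local prefix:100 "ℓ" => cs.length

/-- Conjugation pullback as an additive automorphism of `W → ZMod 2`. -/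
def conjAct (w : W) : (W → ZMod 2) ≃+ (W → ZMod 2) where
  toFun g t := g (w⁻¹ * t * w)
  invFun g t := g (w * t * w⁻¹)
  left_inv g := by funext t; simp [mul_assoc]
  right_inv g := by funext t; simp [mul_assoc]
  map_add' g h := rfl

@[simp] lemma conjAct_apply (w : W) (g : W → ZMod 2) (t : W) :
    conjAct w g t = g (w⁻¹ * t * w) := rfl

/-- The conjugation action of `W` on `Multiplicative (W → ZMod 2)`. -/
def phi : W →* MulAut (Multiplicative (W → ZMod 2)) where
  toFun w := AddEquiv.toMultiplicative (conjAct w)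
  map_one' := by
    apply MulEquiv.ext; intro g
    show Multiplicative.ofAdd (conjAct (1 : W) g.toAdd) = g
    funext t
    show g.toAdd ((1 : W)⁻¹ * t * 1) = g.toAdd t
    rw [inv_one, one_mul, mul_one]
  map_mul' u v := by
    apply MulEquiv.ext; intro g
    show Multiplicative.ofAdd (conjAct (u * v) g.toAdd)
      = Multiplicative.ofAdd (conjAct u (conjAct v g.toAdd))
    congr 1
    funext t
    simp [mul_assoc]

lemma phi_apply_toAdd (w : W) (g : Multiplicative (W → ZMod 2)) :
    (phi (W := W) w g).toAdd = conjAct w g.toAdd := rfl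

/-- Indicator function. -/
noncomputable def ind (x : W) : W → ZMod 2 := fun t => if t = x then 1 else 0

lemma conjAct_ind (w x : W) : conjAct w (ind x) = ind (w * x * w⁻¹) := by
  funext t
  simp only [conjAct_apply, ind]
  congr 1
  simp only [eq_iff_iff]
  constructor
  · rintro h
    rw [show t = w * (w⁻¹ * t * w) * w⁻¹ by group, h]
  · rintro rfl; group

abbrev SD (W : Type*) [Group W] := SemidirectProduct (Multiplicative (W → ZMod 2)) W phi

/-- Generator images for the lift. -/
noncomputable def fstar (i : B) : SD W :=
  ⟨Multiplicative.ofAdd (ind (σ i)), σ i⟩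

lemma sd_pow_right (a : SD W) (m : ℕ) : (a ^ m).right = a.right ^ m := by
  have : ∀ b : SD W, b.right = SemidirectProduct.rightHom b := fun _ => rfl
  rw [this, map_pow]; rfl

lemma sd_pow_left (a : SD W) (m : ℕ) :
    (a ^ m).left = ∏ k ∈ Finset.range m, phi (a.right ^ k) a.left := by
  induction m with
  | zero => simp
  | succ m ih =>
    rw [pow_succ, SemidirectProduct.mul_left, ih, Finset.prod_range_succ, sd_pow_right]

lemma simple_mul_inv_pow (i j : B) (k : ℕ) :
    σ i * ((σ i * σ j)⁻¹) ^ k = (σ i * σ j) ^ k * σ i := by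
  induction k with
  | zero => simp
  | succ k ih =>
    have h1 : σ i * (σ i * σ j)⁻¹ = (σ i * σ j) * σ i := by
      rw [mul_inv_rev, cs.inv_simple, cs.inv_simple, ← mul_assoc, mul_assoc]
    calc σ i * ((σ i * σ j)⁻¹) ^ (k + 1)
        = (σ i * (σ i * σ j)⁻¹) * ((σ i * σ j)⁻¹) ^ k := by rw [pow_succ', ← mul_assoc]
      _ = (σ i * σ j) * (σ i * ((σ i * σ j)⁻¹) ^ k) := by rw [h1, mul_assoc]
      _ = (σ i * σ j) * ((σ i * σ j) ^ k * σ i) := by rw [ih]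
      _ = (σ i * σ j) ^ (k + 1) * σ i := by rw [pow_succ']; simp [mul_assoc]

lemma conj_pow_simple (i j : B) (k : ℕ) :
    (σ i * σ j) ^ k * σ i * ((σ i * σ j) ^ k)⁻¹ = (σ i * σ j) ^ (2 * k) * σ i := by
  rw [← inv_pow, mul_assoc, simple_mul_inv_pow cs i j k, ← mul_assoc, ← pow_add, two_mul]

lemma conj_pow_simple' (i j : B) (k : ℕ) :
    (σ i * σ j) ^ k * (σ i * σ j * σ i) * ((σ i * σ j) ^ k)⁻¹
      = (σ i * σ j) ^ (2 * k + 1) * σ i := by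
  have h2 : σ i * σ j * σ i = (σ i * σ j) ^ 1 * σ i := by rw [pow_one]
  rw [h2, ← mul_assoc, ← pow_add, ← inv_pow, mul_assoc, simple_mul_inv_pow cs i j k,
    ← mul_assoc, ← pow_add, show k + 1 + k = 2 * k + 1 by omega]

lemma liftable : M.IsLiftable (fstar (cs := cs)) := by
  intro i j
  apply SemidirectProduct.ext
  case right =>
    rw [sd_pow_right, SemidirectProduct.one_right]
    exact cs.simple_mul_simple_pow i j
  case left =>
    rw [sd_pow_left, SemidirectProduct.one_left]
    have hright : (fstar cs i * fstar cs j).right = σ i * σ j := rfl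
    have hleft : (fstar cs i * fstar cs j).left =
        Multiplicative.ofAdd (ind (σ i) + ind (σ i * σ j * σ i)) := by
      rw [show (fstar cs i * fstar cs j).left
          = (fstar cs i).left * phi (fstar cs i).right (fstar cs j).left
        from SemidirectProduct.mul_left _ _]
      show Multiplicative.ofAdd (ind (σ i)) * phi (σ i) (Multiplicative.ofAdd (ind (σ j))) = _
      have : phi (σ i) (Multiplicative.ofAdd (ind (σ j)))
          = Multiplicative.ofAdd (ind (σ i * σ j * (σ i)⁻¹)) := by
        show Multiplicative.ofAdd (conjAct (σ i) (ind (σ j))) = _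
        rw [conjAct_ind]
      rw [this, ← ofAdd_add, cs.inv_simple]
    rw [hright, hleft]
    have key : ∀ k : ℕ, (phi ((σ i * σ j) ^ k)
        (Multiplicative.ofAdd (ind (σ i) + ind (σ i * σ j * σ i)))) =
        Multiplicative.ofAdd (ind ((σ i * σ j) ^ (2 * k) * σ i)
          + ind ((σ i * σ j) ^ (2 * k + 1) * σ i)) := by
      intro k
      show Multiplicative.ofAdd (conjAct ((σ i * σ j) ^ k) (ind (σ i) + ind (σ i * σ j * σ i))) = _
      rw [map_add, conjAct_ind, conjAct_ind, conj_pow_simple cs i j k,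
        conj_pow_simple' cs i j k]
    simp only [key]
    rw [← ofAdd_sum, show (1 : Multiplicative (W → ZMod 2)) = Multiplicative.ofAdd 0 from rfl]
    congr 1
    have reindex : ∑ k ∈ Finset.range (M i j),
        (ind ((σ i * σ j) ^ (2 * k) * σ i) + ind ((σ i * σ j) ^ (2 * k + 1) * σ i))
        = ∑ k ∈ Finset.range (2 * M i j), ind ((σ i * σ j) ^ k * σ i) := by
      induction (M i j) with
      | zero => simp
      | succ n ihn =>
        rw [Finset.sum_range_succ, ihn, show 2 * (n + 1) = 2 * n + 1 + 1 by ring,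
          Finset.sum_range_succ, Finset.sum_range_succ, add_assoc]
    rw [reindex, two_mul, Finset.sum_range_add]
    have hper : ∀ k, ind ((σ i * σ j) ^ (M i j + k) * σ i) = ind ((σ i * σ j) ^ k * σ i) := by
      intro k
      rw [pow_add, cs.simple_mul_simple_pow i j, one_mul]
    simp only [hper]
    rw [← Finset.sum_add_distrib]
    refine Finset.sum_eq_zero fun k _ => ?_
    funext t
    simp only [Pi.add_apply, Pi.zero_apply]
    exact CharTwo.add_self_eq_zero _

/-- The parity homomorphism. -/
noncomputable def psi : W →* SD W := cs.lift ⟨fstar cs, liftable cs⟩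

/-- `nn cs w t` : parity of the number of occurrences of `t` as a left inversion of `w`. -/
noncomputable def nn (w t : W) : ZMod 2 := ((psi cs w).left).toAdd t

lemma nn_one (t : W) : nn cs 1 t = 0 := by
  unfold nn
  rw [map_one, SemidirectProduct.one_left]
  rfl

lemma nn_simple (i : B) (t : W) : nn cs (σ i) t = if t = σ i then 1 else 0 := by
  unfold nn psi
  rw [cs.lift_apply_simple]
  rfl

lemma psi_right (w : W) : (psi cs w).right = w := by
  have h : (SemidirectProduct.rightHom.comp (psi cs)) = MonoidHom.id W := by
    apply cs.ext_simple
    intro i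
    show SemidirectProduct.rightHom (psi cs (σ i)) = σ i
    unfold psi
    rw [cs.lift_apply_simple]
    rfl
  exact congrFun (congrArg (fun f => f.toFun) h) w

lemma nn_mul (u v t : W) : nn cs (u * v) t = nn cs u t + nn cs v (u⁻¹ * t * u) := by
  unfold nn
  rw [map_mul, SemidirectProduct.mul_left, psi_right]
  rfl


lemma nn_refl_self {t : W} (ht : cs.IsReflection t) : nn cs t t = 1 := by
  obtain ⟨w, i, hts⟩ := ht
  have h1 : nn cs (w * σ i * w⁻¹) (w * σ i * w⁻¹)
      = nn cs w (w * σ i * w⁻¹) + nn cs (σ i * w⁻¹) (σ i) := by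
    rw [show w * σ i * w⁻¹ = w * (σ i * w⁻¹) by rw [mul_assoc]]
    rw [nn_mul]
    congr 2
    group
  have h2 : nn cs (σ i * w⁻¹) (σ i) = 1 + nn cs w⁻¹ (σ i) := by
    rw [nn_mul, nn_simple, if_pos rfl]
    congr 1
    rw [cs.inv_simple, cs.simple_mul_simple_self, one_mul]
  have h3 : nn cs w (w * σ i * w⁻¹) + nn cs w⁻¹ (σ i) = 0 := by
    have h0 := nn_one cs (w * σ i * w⁻¹)
    rw [← mul_inv_cancel w, nn_mul,
      show w⁻¹ * (w * σ i * w⁻¹) * w = σ i by group] at h0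
    exact h0
  rw [hts, h1, h2,
    show nn cs w (w * σ i * w⁻¹) + (1 + nn cs w⁻¹ (σ i))
      = nn cs w (w * σ i * w⁻¹) + nn cs w⁻¹ (σ i) + 1 by ring, h3, zero_add]

/-- If `nn w t = 1` then `t` is a left inversion of `w`. -/
lemma nn_eq_one_imp {w t : W} (ht : cs.IsReflection t) (h : nn cs w t = 1) :
    ℓ (t * w) < ℓ w := by
  generalize hl : ℓ w = n
  induction n using Nat.strong_induction_on generalizing w t with
  | _ n IH =>
    rcases eq_or_ne w 1 with rfl | hw
    · rw [nn_one] at h; exact absurd h (by decide)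
    · obtain ⟨i, hi⟩ := cs.exists_leftDescent_of_ne_one hw
      rw [cs.isLeftDescent_iff] at hi
      set w' := σ i * w with hw'
      have hww : w = σ i * w' := by rw [hw', ← mul_assoc, cs.simple_mul_simple_self, one_mul]
      have hsplit : nn cs w t = (if t = σ i then 1 else 0) + nn cs w' (σ i * t * σ i) := by
        nth_rewrite 1 [hww]
        rw [nn_mul, nn_simple, cs.inv_simple]
      by_cases hti : t = σ i
      · rw [hti, ← hw']
        omega
      · rw [hsplit, if_neg hti, zero_add] at h
        have hconj : cs.IsReflection (σ i * t * σ i) := by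
          have := ht.conj (σ i)
          rwa [cs.inv_simple] at this
        have hlw' : ℓ w' < n := by omega
        have := IH (ℓ w') hlw' hconj h rfl
        have hle : ℓ (t * w) ≤ ℓ (σ i * t * σ i * w') + 1 := by
          have hexp : t * w = σ i * (σ i * t * σ i * w') := by
            rw [show σ i * (σ i * t * σ i * w') = σ i * (σ i * (t * (σ i * w'))) by group,
              cs.simple_mul_simple_cancel_left, ← hww]
          rw [hexp]
          rcases cs.length_simple_mul (σ i * t * σ i * w') i with h' | h' <;> omega
        omega

lemma nn_eq_one_iff {w t : W} (ht : cs.IsReflection t) :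
    nn cs w t = 1 ↔ ℓ (t * w) < ℓ w := by
  constructor
  · exact nn_eq_one_imp cs ht
  · intro h
    by_contra hne
    have h0 : nn cs w t = 0 := by
      rcases (by decide : ∀ x : ZMod 2, x = 0 ∨ x = 1) (nn cs w t) with h' | h'
      · exact h'
      · exact absurd h' hne
    have h1 : nn cs (t * w) t = 1 := by
      rw [nn_mul, nn_refl_self cs ht, show t⁻¹ * t * t = t by rw [ht.inv, ht.mul_self, one_mul], h0, add_zero]
    have := nn_eq_one_imp cs ht h1
    rw [← mul_assoc, ht.mul_self, one_mul] at this
    omega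

/-- Bridge: parity of the number of occurrences of `t` in the left inversion sequence. -/
lemma count_leftInvSeq (ω : List B) (t : W) :
    (((cs.leftInvSeq ω).count t : ℕ) : ZMod 2) = nn cs (π ω) t := by
  induction ω generalizing t with
  | nil => simp [nn_one]
  | cons i ω ih =>
    have hcons : cs.leftInvSeq (i :: ω) = σ i :: List.map (MulAut.conj (σ i)) (cs.leftInvSeq ω) :=
      rfl
    have hinj : Function.Injective (MulAut.conj (σ i) : W → W) :=
      (MulAut.conj (σ i)).injective
    have ht : t = MulAut.conj (σ i) (σ i * t * σ i) := by
      simp only [MulAut.conj_apply]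
      rw [cs.inv_simple]
      rw [← mul_assoc, ← mul_assoc, cs.simple_mul_simple_self, one_mul, mul_assoc,
        cs.simple_mul_simple_self, mul_one]
    have hcnt : List.count t (List.map (⇑(MulAut.conj (σ i))) (cs.leftInvSeq ω))
        = List.count (σ i * t * σ i) (cs.leftInvSeq ω) := by
      nth_rewrite 1 [ht]
      exact List.count_map_of_injective _ _ hinj _
    rw [hcons, List.count_cons, hcnt, cs.wordProd_cons, nn_mul, nn_simple, cs.inv_simple]
    push_cast
    rw [ih]
    rcases eq_or_ne t (σ i) with h | h
    · rw [if_pos h, if_pos (by simpa using h.symm)]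
      ring
    · rw [if_neg h, if_neg (by simpa using Ne.symm h)]
      ring

lemma mem_leftInvSeq_of_lt {ω : List B} {t : W} (ht : cs.IsReflection t)
    (h : ℓ (t * π ω) < ℓ (π ω)) : t ∈ cs.leftInvSeq ω := by
  have h1 : nn cs (π ω) t = 1 := (nn_eq_one_iff cs ht).mpr h
  by_contra hmem
  rw [← count_leftInvSeq, List.count_eq_zero_of_not_mem hmem] at h1
  simp at h1

/-- Left strong exchange. -/
lemma strong_exchange_left {ω : List B} {t : W} (ht : cs.IsReflection t)
    (h : ℓ (t * π ω) < ℓ (π ω)) :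
    ∃ j < ω.length, t * π ω = π (ω.eraseIdx j) := by
  have hmem := mem_leftInvSeq_of_lt cs ht h
  obtain ⟨j, hj, hgt⟩ := List.mem_iff_getElem.mp hmem
  have hj' : j < ω.length := by rwa [cs.length_leftInvSeq] at hj
  refine ⟨j, hj', ?_⟩
  rw [show t = (cs.leftInvSeq ω).getD j 1 by rw [List.getD_eq_getElem _ 1 hj, hgt]]
  exact cs.getD_leftInvSeq_mul_wordProd ω j

/-- Right strong exchange. -/
lemma strong_exchange_right {ω : List B} {t : W} (ht : cs.IsReflection t)
    (h : ℓ (π ω * t) < ℓ (π ω)) :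
    ∃ j < ω.length, π ω * t = π (ω.eraseIdx j) := by
  have h' : ℓ (t * π ω.reverse) < ℓ (π ω.reverse) := by
    rw [cs.wordProd_reverse]
    calc ℓ (t * (π ω)⁻¹) = ℓ ((t * (π ω)⁻¹)⁻¹) := (cs.length_inv _).symm
    _ = ℓ (π ω * t) := by rw [mul_inv_rev, inv_inv, ht.inv]
    _ < ℓ (π ω) := h
    _ = ℓ ((π ω)⁻¹) := (cs.length_inv _).symm
  have hmem := mem_leftInvSeq_of_lt cs ht h'
  rw [cs.leftInvSeq_reverse, List.mem_reverse] at hmem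
  obtain ⟨j, hj, hgt⟩ := List.mem_iff_getElem.mp hmem
  have hj' : j < ω.length := by rwa [cs.length_rightInvSeq] at hj
  refine ⟨j, hj', ?_⟩
  rw [show t = (cs.rightInvSeq ω).getD j 1 by rw [List.getD_eq_getElem _ 1 hj, hgt]]
  exact cs.wordProd_mul_getD_rightInvSeq ω j

/-- Deletion property: every word has a reduced sublist with the same product. -/
lemma exists_reduced_sublist (ω : List B) :
    ∃ μ, μ.Sublist ω ∧ cs.IsReduced μ ∧ π μ = π ω := by
  generalize hn : ω.length = n
  induction n using Nat.strong_induction_on generalizing ω with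
  | _ n IHn =>
    by_cases hred : cs.IsReduced ω
    · exact ⟨ω, List.Sublist.refl ω, hred, rfl⟩
    · have hlt : ℓ (π ω) < ω.length :=
        lt_of_le_of_ne (cs.length_wordProd_le ω) hred
      have hωne : ω ≠ [] := by
        rintro rfl; simp at hlt
      have hex : ∃ j, ¬ cs.IsReduced (ω.take (j + 1)) := by
        refine ⟨ω.length - 1, ?_⟩
        rw [Nat.sub_add_cancel (Nat.one_le_iff_ne_zero.mpr (by simpa using hωne)),
          List.take_length]
        exact hred
      set j := Nat.find hex with hjdef
      have hj1 : ¬ cs.IsReduced (ω.take (j + 1)) := Nat.find_spec hex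
      have hjmin : ∀ k < j, cs.IsReduced (ω.take (k + 1)) := by
        intro k hk
        by_contra hcon
        have : Nat.find hex ≤ k := Nat.find_le hcon
        omega
      have hjred : cs.IsReduced (ω.take j) := by
        rcases Nat.eq_zero_or_eq_succ_pred j with h0 | hsucc
        · rw [h0]
          show ℓ (π ([] : List B)) = _
          simp
        · rw [hsucc]
          exact hjmin (j - 1) (by omega)
      have hjlt : j < ω.length := by
        by_contra hge
        push_neg at hge
        rw [List.take_of_length_le hge] at hjred
        exact hred hjred
      have htake : ω.take (j + 1) = ω.take j ++ [ω[j]] := by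
        rw [List.take_succ, List.getElem?_eq_getElem hjlt]
        rfl
      have hlen_take : (ω.take j).length = j := by rw [List.length_take]; omega
      have hprod : π (ω.take (j + 1)) = π (ω.take j) * σ (ω[j]) := by
        rw [htake, cs.wordProd_append, cs.wordProd_singleton]
      have h1 : ℓ (π (ω.take j)) = j := by
        have h := hjred
        simp only [CoxeterSystem.IsReduced] at h
        rw [h, hlen_take]
      have hlen_take1 : (ω.take (j + 1)).length = j + 1 := by rw [List.length_take]; omega
      have hdesc : ℓ (π (ω.take j) * σ (ω[j])) < ℓ (π (ω.take j)) := by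
        rcases cs.length_mul_simple (π (ω.take j)) (ω[j]) with hc | hc
        · exfalso
          apply hj1
          show ℓ (π (ω.take (j + 1))) = (ω.take (j + 1)).length
          rw [hprod, hc, h1, hlen_take1]
        · omega
      obtain ⟨k, hk, hke⟩ := strong_exchange_right cs (cs.isReflection_simple (ω[j])) hdesc
      refine ?_
      set μ' := (ω.take j).eraseIdx k ++ ω.drop (j + 1) with hμ'
      have hμ'prod : π μ' = π ω := by
        rw [hμ', cs.wordProd_append, ← hke, ← hprod, ← cs.wordProd_append,
          List.take_append_drop]
      have hμ'sub : μ'.Sublist ω := by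
        have h1 : ((ω.take j).eraseIdx k).Sublist (ω.take (j + 1)) := by
          refine (List.eraseIdx_sublist _ k).trans ?_
          rw [htake]
          exact List.sublist_append_left _ _
        have h2 := List.Sublist.append h1 (List.Sublist.refl (ω.drop (j + 1)))
        rw [List.take_append_drop] at h2
        exact h2
      have hμ'len : μ'.length < n := by
        have hke' : ((ω.take j).eraseIdx k).length + 1 = (ω.take j).length :=
          List.length_eraseIdx_add_one (by rw [hlen_take]; omega)
        rw [hμ', List.length_append, List.length_drop]
        omega
      obtain ⟨μ, hsub, hr, hp⟩ := IHn μ'.length (by omega) μ' rfl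
      exact ⟨μ, hsub.trans hμ'sub, hr, by rw [hp, hμ'prod]⟩

lemma ble_refl (w : W) : BruhatLE cs w w := Relation.ReflTransGen.refl

lemma ble_trans {x y z : W} (h1 : BruhatLE cs x y) (h2 : BruhatLE cs y z) : BruhatLE cs x z :=
  Relation.ReflTransGen.trans h1 h2

lemma ble_length_le {x y : W} (h : BruhatLE cs x y) : ℓ x ≤ ℓ y := by
  induction h with
  | refl => exact le_refl _
  | tail h1 h2 ih => exact le_trans ih (le_of_lt h2.2)

lemma ble_length_lt {x y : W} (h : BruhatLE cs x y) (hne : x ≠ y) : ℓ x < ℓ y := by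
  rcases Relation.ReflTransGen.cases_tail h with h' | ⟨c, hc, hstep⟩
  · exact absurd h'.symm hne
  · exact lt_of_le_of_lt (ble_length_le cs hc) hstep.2

lemma ble_step_right {w t : W} (ht : cs.IsReflection t) (h : ℓ w < ℓ (w * t)) :
    BruhatLE cs w (w * t) :=
  Relation.ReflTransGen.single ⟨⟨t, ht, rfl⟩, h⟩

lemma ble_step_left {w t : W} (ht : cs.IsReflection t) (h : ℓ w < ℓ (t * w)) :
    BruhatLE cs w (t * w) := by
  have hconj : cs.IsReflection (w⁻¹ * t * w) := by
    have := ht.conj w⁻¹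
    rwa [inv_inv] at this
  have heq : t * w = w * (w⁻¹ * t * w) := by group
  rw [heq]
  exact Relation.ReflTransGen.single ⟨⟨_, hconj, rfl⟩, by rw [← heq]; exact h⟩

lemma ble_step_left_simple {w : W} {i : B} (h : ℓ w < ℓ (σ i * w)) :
    BruhatLE cs w (σ i * w) :=
  ble_step_left cs (cs.isReflection_simple i) h

lemma ble_of_mul_simple_left {w : W} {i : B} (h : ℓ (σ i * w) < ℓ w) :
    BruhatLE cs (σ i * w) w := by
  have := ble_step_left_simple cs (w := σ i * w) (i := i)
    (by rwa [← mul_assoc, cs.simple_mul_simple_self, one_mul])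
  rwa [← mul_assoc, cs.simple_mul_simple_self, one_mul] at this

/-- Any element below `w` in Bruhat order is represented by a reduced sublist of any
reduced word for `w`. -/
lemma subword_of_ble {z w : W} (h : BruhatLE cs z w) {ω : List B} (hred : cs.IsReduced ω)
    (hw : π ω = w) : ∃ μ, μ.Sublist ω ∧ cs.IsReduced μ ∧ π μ = z := by
  induction h using Relation.ReflTransGen.head_induction_on with
  | refl => exact ⟨ω, List.Sublist.refl ω, hred, hw⟩
  | head hstep _h2 ih =>
    rename_i a c
    obtain ⟨⟨t, ht, hab⟩, hlen⟩ := hstep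
    obtain ⟨μc, hsub, hredc, hprodc⟩ := ih
    have ha : π μc * t = a := by
      rw [hprodc, hab, mul_assoc, ht.mul_self, mul_one]
    rw [← ha] at hlen ⊢
    rw [← hprodc] at hlen
    obtain ⟨j, hj, hje⟩ := strong_exchange_right cs ht hlen
    obtain ⟨ν, hνsub, hνred, hνprod⟩ := exists_reduced_sublist cs (μc.eraseIdx j)
    exact ⟨ν, (hνsub.trans (List.eraseIdx_sublist μc j)).trans hsub, hνred,
      by rw [hνprod, ← hje]⟩

/-- Grand simultaneous induction: lifting property, descent property, subword property. -/
theorem grand (n : ℕ) :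
    (∀ w, ℓ w = n → ∀ z, BruhatLE cs z w → ∀ i, ℓ w < ℓ (σ i * w) → ℓ z < ℓ (σ i * z) →
      BruhatLE cs (σ i * z) (σ i * w)) ∧
    (∀ y, ℓ y = n → ∀ z, BruhatLE cs z y → ∀ i, ℓ (σ i * y) < ℓ y → ℓ z < ℓ (σ i * z) →
      BruhatLE cs (σ i * z) y) ∧
    (∀ w, ℓ w = n → ∀ ω, cs.IsReduced ω → π ω = w → ∀ μ, μ.Sublist ω → BruhatLE cs (π μ) w) := by
  induction n using Nat.strong_induction_on with
  | _ n IH =>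
  refine ⟨?_, ?_, ?_⟩
  · -- Lift
    intro w hw z hz i hup hzi
    rcases Relation.ReflTransGen.cases_tail hz with heq | ⟨y, hzy, hstep⟩
    · rw [heq]
      exact ble_refl cs _
    · obtain ⟨⟨t, ht, hwt⟩, hlyw⟩ := hstep
      have hly : ℓ y < n := hw ▸ hlyw
      rcases Nat.lt_or_ge (ℓ y) (ℓ (σ i * y)) with hyu | hyd
      · have h1 : BruhatLE cs (σ i * z) (σ i * y) := (IH (ℓ y) hly).1 y rfl z hzy i hyu hzi
        have hmul : σ i * w = (σ i * y) * t := by rw [hwt, mul_assoc]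
        have h2 : BruhatLE cs (σ i * y) (σ i * w) := by
          rw [hmul]
          apply ble_step_right cs ht
          rw [← hmul]
          have d1 : ℓ (σ i * y) = ℓ y + 1 := by rcases cs.length_simple_mul y i with h | h <;> omega
          have d2 : ℓ (σ i * w) = ℓ w + 1 := by rcases cs.length_simple_mul w i with h | h <;> omega
          omega
        exact ble_trans cs h1 h2
      · have hyd' : ℓ (σ i * y) < ℓ y :=
          lt_of_le_of_ne hyd (cs.length_simple_mul_ne y i)
        have h1 : BruhatLE cs (σ i * z) y := (IH (ℓ y) hly).2.1 y rfl z hzy i hyd' hzi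
        have h2 : BruhatLE cs y w := Relation.ReflTransGen.single ⟨⟨t, ht, hwt⟩, hlyw⟩
        have h3 : BruhatLE cs w (σ i * w) := ble_step_left_simple cs hup
        exact ble_trans cs h1 (ble_trans cs h2 h3)
  · -- Desc
    intro y hy z hz i hdy hzi
    rcases Relation.ReflTransGen.cases_tail hz with heq | ⟨x, hzx, hstep⟩
    · exfalso
      rw [← heq] at hzi
      omega
    · obtain ⟨⟨t, ht, hyt⟩, hlxy⟩ := hstep
      have hlx : ℓ x < n := hy ▸ hlxy
      have hxyt : x = y * t := by rw [hyt, mul_assoc, ht.mul_self, mul_one]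
      rcases Nat.lt_or_ge (ℓ x) (ℓ (σ i * x)) with hxu | hxd
      · have h1 : BruhatLE cs (σ i * z) (σ i * x) := (IH (ℓ x) hlx).1 x rfl z hzx i hxu hzi
        have d1 : ℓ (σ i * y) + 1 = ℓ y := by
          rcases cs.length_simple_mul y i with h | h <;> omega
        obtain ⟨ρ, hρred, hρw⟩ := cs.exists_reduced_word' (σ i * y)
        have hπiρ : π (i :: ρ) = y := by
          rw [cs.wordProd_cons, ← hρw, ← mul_assoc, cs.simple_mul_simple_self, one_mul]
        have hρlen : ρ.length = ℓ (σ i * y) := by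
          rw [hρw]; exact (hρred).symm
        have hexch : ℓ (π (i :: ρ) * t) < ℓ (π (i :: ρ)) := by
          rw [hπiρ, ← hxyt]
          exact hlxy
        obtain ⟨k, hk, hke⟩ := strong_exchange_right cs ht hexch
        rw [hπiρ, ← hxyt] at hke
        match k, hk with
        | 0, _ =>
          have hx0 : x = π ρ := by rw [hke]; rfl
          have h2 : σ i * x = y := by
            rw [hx0, ← hρw, ← mul_assoc, cs.simple_mul_simple_self, one_mul]
          rw [h2] at h1
          exact h1
        | (k' + 1), hk =>
          have hx1 : x = σ i * π (ρ.eraseIdx k') := by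
            rw [hke, List.eraseIdx_cons_succ, cs.wordProd_cons]
          have h2 : σ i * x = π (ρ.eraseIdx k') := by
            rw [hx1, ← mul_assoc, cs.simple_mul_simple_self, one_mul]
          have h3 : BruhatLE cs (π (ρ.eraseIdx k')) (σ i * y) :=
            (IH (ℓ (σ i * y)) (by omega)).2.2 (σ i * y) rfl ρ hρred hρw.symm
              (ρ.eraseIdx k') (List.eraseIdx_sublist ρ k')
          have h4 : BruhatLE cs (σ i * y) y := ble_of_mul_simple_left cs hdy
          rw [h2] at h1
          exact ble_trans cs h1 (ble_trans cs h3 h4)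
      · have hxd' : ℓ (σ i * x) < ℓ x :=
          lt_of_le_of_ne hxd (cs.length_simple_mul_ne x i)
        have h1 : BruhatLE cs (σ i * z) x := (IH (ℓ x) hlx).2.1 x rfl z hzx i hxd' hzi
        have h2 : BruhatLE cs x y := Relation.ReflTransGen.single ⟨⟨t, ht, hyt⟩, hlxy⟩
        exact ble_trans cs h1 h2
  · -- Subword
    intro w hw ω hred hπ μ hμ
    obtain ⟨ν, hνsub, hνred, hνprod⟩ := exists_reduced_sublist cs μ
    rw [← hνprod]
    have hνω := hνsub.trans hμ
    clear hνprod hνsub hμ μ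
    match ω, hred, hπ, hνω with
    | [], hred, hπ, hνω =>
      have hν : ν = [] := List.sublist_nil.mp hνω
      subst hν
      rw [hπ]
      exact ble_refl cs _
    | (j :: ω₁), hred, hπ, hνω =>
      have hω₁red : cs.IsReduced ω₁ := by
        have := CoxeterSystem.IsReduced.drop hred 1
        simpa using this
      have hlw₁ : ℓ (π ω₁) = ω₁.length := hω₁red
      have hlw : ℓ w = ω₁.length + 1 := by
        rw [← hπ]
        have : ℓ (π (j :: ω₁)) = (j :: ω₁).length := hred
        simpa using this
      have hjw : σ j * π ω₁ = w := by rw [← hπ, cs.wordProd_cons]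
      rcases List.sublist_cons_iff.mp hνω with hsub1 | ⟨μ₁, hνeq, hμ₁sub⟩
      · have h1 : BruhatLE cs (π ν) (π ω₁) :=
          (IH (ℓ (π ω₁)) (by omega)).2.2 (π ω₁) rfl ω₁ hω₁red rfl ν hsub1
        have h2 : BruhatLE cs (π ω₁) w := by
          rw [← hjw]
          exact ble_step_left_simple cs (by rw [hjw]; omega)
        exact ble_trans cs h1 h2
      · subst hνeq
        have hμ₁red : cs.IsReduced μ₁ := by
          have := CoxeterSystem.IsReduced.drop hνred 1
          simpa using this
        have hz₁ : ℓ (π μ₁) = μ₁.length := hμ₁red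
        have hzlen : ℓ (π (j :: μ₁)) = μ₁.length + 1 := by
          have : ℓ (π (j :: μ₁)) = (j :: μ₁).length := hνred
          simpa using this
        have h1 : BruhatLE cs (π μ₁) (π ω₁) :=
          (IH (ℓ (π ω₁)) (by omega)).2.2 (π ω₁) rfl ω₁ hω₁red rfl μ₁ hμ₁sub
        have hup1 : ℓ (π ω₁) < ℓ (σ j * π ω₁) := by rw [hjw]; omega
        have hup2 : ℓ (π μ₁) < ℓ (σ j * π μ₁) := by
          rw [show σ j * π μ₁ = π (j :: μ₁) from (cs.wordProd_cons j μ₁).symm]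
          omega
        have h2 := (IH (ℓ (π ω₁)) (by omega)).1 (π ω₁) rfl (π μ₁) h1 j hup1 hup2
        rw [cs.wordProd_cons, ← hjw]
        exact h2

/-- The lifting property of the Bruhat order. -/
lemma ble_lift {z w : W} {i : B} (hz : BruhatLE cs z w) (hw : ℓ w < ℓ (σ i * w))
    (hzi : ℓ z < ℓ (σ i * z)) : BruhatLE cs (σ i * z) (σ i * w) :=
  (grand cs (ℓ w)).1 w rfl z hz i hw hzi


lemma blt_trans' {x y z : W} (h1 : BruhatLT cs x y) (h2 : BruhatLT cs y z) :
    BruhatLT cs x z := by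
  refine ⟨ble_trans cs h1.1 h2.1, ?_⟩
  intro he
  have l1 := ble_length_lt cs h1.1 h1.2
  have l2 := ble_length_lt cs h2.1 h2.2
  rw [he] at l1
  omega

lemma blt_step_left {w : W} {i : B} (h : ℓ w < ℓ (σ i * w)) : BruhatLT cs w (σ i * w) :=
  ⟨ble_step_left_simple cs h, fun he => by rw [← he] at h; omega⟩

lemma blt_lift {z w : W} {i : B} (hz : BruhatLT cs z w) (hw : ℓ w < ℓ (σ i * w))
    (hzi : ℓ z < ℓ (σ i * z)) : BruhatLT cs (σ i * z) (σ i * w) :=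
  ⟨ble_lift cs hz.1 hw hzi, fun he => hz.2 (mul_left_cancel he)⟩

end BruhatAux

namespace BruhatAux

variable {B W : Type*} [Group W] {M : CoxeterMatrix B}

section Hecke

variable {cs : CoxeterSystem M W} {A : Type*} [Ring A] [Algebra (LaurentPolynomial ℤ) A]
  (ha : HeckeAlg cs A)

local notation "R" => LaurentPolynomial ℤ

lemma alg_mul_mul (r s : R) (a b : A) :
    (algebraMap R A r * a) * (algebraMap R A s * b) = algebraMap R A (r * s) * (a * b) := by
  rw [map_mul, mul_assoc, ← mul_assoc a, ← Algebra.commutes s a, mul_assoc, ← mul_assoc,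
    ← mul_assoc]

lemma H_one : ha.H 1 = 1 := by
  unfold HeckeAlg.H
  rw [ha.Tb_one, cs.length_one]
  norm_num

lemma H_simple_mul (i : B) (w : W) (h : cs.length (cs.simple i * w) = cs.length w + 1) :
    ha.H (cs.simple i * w) = ha.H (cs.simple i) * ha.H w := by
  unfold HeckeAlg.H
  rw [alg_mul_mul, ha.Tb_mul (cs.simple i) w (by rw [cs.length_simple]; omega), ← T_add]
  rw [cs.length_simple, h]
  norm_num
  rw [add_comm ((cs.length w : ℤ)) 1]

lemma Tb_simple_sq (i : B) : ha.Tb (cs.simple i) * ha.Tb (cs.simple i)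
    = algebraMap R A (T (-2)) * ha.Tb (cs.simple i) - ha.Tb (cs.simple i)
      + algebraMap R A (T (-2)) := by
  have hq := ha.Tb_quadratic i
  set u := ha.Tb (cs.simple i) with hu
  set c := algebraMap R A (T (-2)) with hc
  have hexp : (u + 1) * (u - c) = u * u - u * c + (u - c) := by noncomm_ring
  rw [hexp] at hq
  have hcu : u * c = c * u := (Algebra.commutes (T (-2)) u).symm
  rw [← sub_eq_zero,
    show u * u - (c * u - u + c) = u * u - u * c + (u - c) by rw [hcu]; abel]
  exact hq

lemma H_simple_sq (i : B) : ha.H (cs.simple i) * ha.H (cs.simple i)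
    = algebraMap R A (T (-1) - T 1) * ha.H (cs.simple i) + 1 := by
  unfold HeckeAlg.H
  rw [cs.length_simple]
  rw [alg_mul_mul, Tb_simple_sq]
  rw [show ((1 : ℕ) : ℤ) = 1 from rfl, ← T_add]
  norm_num
  set u := ha.Tb (cs.simple i) with hu
  have e2 : (algebraMap R A (T 2)) * (algebraMap R A (T (-2))) = 1 := by
    rw [← map_mul, ← T_add]; norm_num
  have e1 : (algebraMap R A (T 2)) * ((algebraMap R A (T (-2))) * u) = u := by
    rw [← mul_assoc, e2, one_mul]
  have e3 : (algebraMap R A (T (-1))) * ((algebraMap R A (T 1)) * u) = u := by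
    rw [← mul_assoc, ← map_mul, ← T_add]
    norm_num
  have e4 : (algebraMap R A (T 1)) * ((algebraMap R A (T 1)) * u) =
      (algebraMap R A (T 2)) * u := by
    rw [← mul_assoc, ← map_mul, ← T_add]
    norm_num
  rw [mul_add, mul_sub, e1, e2, sub_mul, e3, e4]

end Hecke

section Hecke2

variable {cs : CoxeterSystem M W} {A : Type*} [Ring A] [Algebra (LaurentPolynomial ℤ) A]
  (ha : HeckeAlg cs A)

local notation "R" => LaurentPolynomial ℤ

lemma H_simple_inv_right (i : B) :
    ha.H (cs.simple i) * (ha.H (cs.simple i) + algebraMap R A (T 1 - T (-1))) = 1 := by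
  rw [mul_add, H_simple_sq, ← Algebra.commutes (T 1 - T (-1)) (ha.H (cs.simple i))]
  rw [show (T (-1) - T 1 : R) = -(T 1 - T (-1)) by ring, map_neg, neg_mul]
  abel

lemma H_simple_inv_left (i : B) :
    (ha.H (cs.simple i) + algebraMap R A (T 1 - T (-1))) * ha.H (cs.simple i) = 1 := by
  rw [add_mul, H_simple_sq]
  rw [show (T (-1) - T 1 : R) = -(T 1 - T (-1)) by ring, map_neg, neg_mul]
  abel

lemma bar_d_H_simple (bar : ha.Bar) (i : B) :
    bar.d (ha.H (cs.simple i)) = ha.H (cs.simple i) + algebraMap R A (T 1 - T (-1)) := by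
  have h1 : bar.d (ha.H (cs.simple i)) * ha.H (cs.simple i) = 1 := by
    have := bar.d_H_mul (cs.simple i)
    rwa [cs.inv_simple] at this
  calc bar.d (ha.H (cs.simple i))
      = bar.d (ha.H (cs.simple i)) *
        (ha.H (cs.simple i) * (ha.H (cs.simple i) + algebraMap R A (T 1 - T (-1)))) := by
        rw [H_simple_inv_right, mul_one]
    _ = (bar.d (ha.H (cs.simple i)) * ha.H (cs.simple i)) *
        (ha.H (cs.simple i) + algebraMap R A (T 1 - T (-1))) := by rw [mul_assoc]
    _ = ha.H (cs.simple i) + algebraMap R A (T 1 - T (-1)) := by rw [h1, one_mul]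

/-- `H_s · H_z` when `ℓ(sz) > ℓ(z)`. -/
lemma H_simple_mul_up (i : B) (z : W) (h : cs.length z < cs.length (cs.simple i * z)) :
    ha.H (cs.simple i) * ha.H z = ha.H (cs.simple i * z) := by
  have h' : cs.length (cs.simple i * z) = cs.length z + 1 := by
    rcases cs.length_simple_mul z i with h1 | h1 <;> omega
  rw [H_simple_mul ha i z h']

/-- `H_s · H_z` when `ℓ(sz) < ℓ(z)`. -/
lemma H_simple_mul_down (i : B) (z : W) (h : cs.length (cs.simple i * z) < cs.length z) :
    ha.H (cs.simple i) * ha.H z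
      = ha.H (cs.simple i * z) + algebraMap R A (T (-1) - T 1) * ha.H z := by
  have hz : z = cs.simple i * (cs.simple i * z) := by
    rw [← mul_assoc, cs.simple_mul_simple_self, one_mul]
  have hup : ha.H (cs.simple i) * ha.H (cs.simple i * z) = ha.H z := by
    rw [H_simple_mul_up ha i (cs.simple i * z) (by rw [← hz]; exact h), ← hz]
  calc ha.H (cs.simple i) * ha.H z
      = ha.H (cs.simple i) * (ha.H (cs.simple i) * ha.H (cs.simple i * z)) := by rw [hup]
    _ = (ha.H (cs.simple i) * ha.H (cs.simple i)) * ha.H (cs.simple i * z) := by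
        rw [mul_assoc]
    _ = (algebraMap R A (T (-1) - T 1) * ha.H (cs.simple i) + 1) * ha.H (cs.simple i * z) := by
        rw [H_simple_sq]
    _ = algebraMap R A (T (-1) - T 1) * (ha.H (cs.simple i) * ha.H (cs.simple i * z))
        + ha.H (cs.simple i * z) := by rw [add_mul, one_mul, mul_assoc]
    _ = _ := by rw [hup]; ring_nf; abel

end Hecke2

end BruhatAux

open BruhatAux

/-- `d(H_y) ∈ H_y + ∑_{z < y} ℤ[v,v⁻¹] H_z`. -/
theorem stmt3 {B W : Type*} [Group W] {M : CoxeterMatrix B} (cs : CoxeterSystem M W)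
    (A : Type*) [Ring A] [Algebra (LaurentPolynomial ℤ) A] (ha : HeckeAlg cs A)
    (bar : ha.Bar) (y : W) :
    bar.d (ha.H y) - ha.H y ∈
      Submodule.span (LaurentPolynomial ℤ) (ha.H '' {z | BruhatLT cs z y}) := by
  generalize hn : cs.length y = n
  induction n using Nat.strong_induction_on generalizing y with
  | _ n IHn =>
  rcases eq_or_ne y 1 with rfl | hy
  · rw [H_one, map_one, sub_self]
    exact Submodule.zero_mem _
  · obtain ⟨i, hi⟩ := cs.exists_leftDescent_of_ne_one hy
    rw [cs.isLeftDescent_iff] at hi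
    set R := LaurentPolynomial ℤ with hR
    set y' := cs.simple i * y with hy'
    have hyy : y = cs.simple i * y' := by
      rw [hy', ← mul_assoc, cs.simple_mul_simple_self, one_mul]
    have hly' : cs.length y' + 1 = cs.length y := hi
    have hH : ha.H y = ha.H (cs.simple i) * ha.H y' := by
      have := H_simple_mul ha i y' (by rw [← hyy]; omega)
      rw [← hyy] at this
      exact this
    set r := bar.d (ha.H y') - ha.H y' with hr
    have hrmem : r ∈ Submodule.span R (ha.H '' {z | BruhatLT cs z y'}) :=
      IHn (cs.length y') (by omega) y' rfl
    set Mspan := Submodule.span R (ha.H '' {z | BruhatLT cs z y}) with hM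
    have hy'y : BruhatLT cs y' y := by
      have := blt_step_left cs (w := y') (i := i) (by rw [← hyy]; omega)
      rwa [← hyy] at this
    have hmono : Submodule.span R (ha.H '' {z | BruhatLT cs z y'}) ≤ Mspan := by
      apply Submodule.span_mono
      apply Set.image_mono
      intro z hz
      exact blt_trans' cs hz hy'y
    have hrM : r ∈ Mspan := hmono hrmem
    have key : ∀ z, BruhatLT cs z y' → ha.H (cs.simple i) * ha.H z ∈ Mspan := by
      intro z hz
      have hzy : BruhatLT cs z y := blt_trans' cs hz hy'y
      rcases Nat.lt_or_ge (cs.length z) (cs.length (cs.simple i * z)) with hup | hdown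
      · rw [H_simple_mul_up ha i z hup]
        apply Submodule.subset_span
        refine ⟨cs.simple i * z, ?_, rfl⟩
        have := blt_lift cs hz (by rw [← hyy]; omega) hup
        rwa [← hyy] at this
      · have hdown' : cs.length (cs.simple i * z) < cs.length z :=
          lt_of_le_of_ne hdown (cs.length_simple_mul_ne z i)
        rw [H_simple_mul_down ha i z hdown']
        have h1 : BruhatLT cs (cs.simple i * z) y := by
          refine blt_trans' cs ?_ hzy
          have := blt_step_left cs (w := cs.simple i * z) (i := i)
            (by rw [← mul_assoc, cs.simple_mul_simple_self, one_mul]; exact hdown')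
          rwa [← mul_assoc, cs.simple_mul_simple_self, one_mul] at this
        apply Submodule.add_mem
        · exact Submodule.subset_span ⟨_, h1, rfl⟩
        · rw [← Algebra.smul_def]
          exact Submodule.smul_mem _ _ (Submodule.subset_span ⟨_, hzy, rfl⟩)
    have hHs_r : ha.H (cs.simple i) * r ∈ Mspan := by
      refine Submodule.span_induction ?_ ?_ ?_ ?_ hrmem
      · rintro x ⟨z, hz, rfl⟩
        exact key z hz
      · rw [mul_zero]; exact Submodule.zero_mem _
      · intro x y hx hy hx' hy'
        rw [mul_add]; exact Submodule.add_mem _ hx' hy'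
      · intro a x hx hx'
        rw [mul_smul_comm]; exact Submodule.smul_mem _ _ hx'
    have hdiff : bar.d (ha.H y) - ha.H y
        = ha.H (cs.simple i) * r
          + algebraMap R A (T 1 - T (-1)) * ha.H y'
          + algebraMap R A (T 1 - T (-1)) * r := by
      have hd : bar.d (ha.H y') = ha.H y' + r := by rw [hr, add_sub_cancel]
      rw [hH, map_mul, bar_d_H_simple, hd]
      rw [add_mul, mul_add, mul_add]
      abel
    rw [hdiff]
    refine Submodule.add_mem _ (Submodule.add_mem _ hHs_r ?_) ?_
    · rw [← Algebra.smul_def]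
      exact Submodule.smul_mem _ _ (Submodule.subset_span ⟨_, hy'y, rfl⟩)
    · rw [← Algebra.smul_def]
      exact Submodule.smul_mem _ _ hrM
end

section
/- (Kazhdan–Lusztig, existence) For each x ∈ W there exists a self-dual element C_x of the Hecke algebra (d(C_x) = C_x) with C_x ∈ H_x + Σ_{y < x} v Z[v] H_y, i.e. C_x - H_x is a linear combination of H_y for y strictly below x in Bruhat order, with coefficients in v Z[v]. -/
open LaurentPolynomial

variable {B W : Type*} [Group W] {M : CoxeterMatrix B}

namespace KLAux

open List

variable {B W : Type*} [Group W] {M : CoxeterMatrix B} (cs : CoxeterSystem M W)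

local prefix:100 "s" => cs.simple
local prefix:100 "π" => cs.wordProd
local prefix:100 "ℓ" => cs.length

abbrev NN (W : Type*) := W → Multiplicative (ZMod 2)

lemma mult_sq (x : Multiplicative (ZMod 2)) : x * x = 1 := by
  rcases (by decide : ∀ y : Multiplicative (ZMod 2), y = 1 ∨ y = Multiplicative.ofAdd 1) x with h | h <;>
    subst h <;> decide

/-- conjugation action of `W` on `W → ZMod 2` -/
def conjAct (w : W) : MulAut (NN W) where
  toFun f := fun u => f (w⁻¹ * u * w)
  invFun f := fun u => f (w * u * w⁻¹)
  left_inv f := by funext u; simp [mul_assoc]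
  right_inv f := by funext u; simp [mul_assoc]
  map_mul' f g := rfl

def conjHom : W →* MulAut (NN W) where
  toFun := conjAct
  map_one' := by ext f u; simp [conjAct]
  map_mul' a b := by ext f u; simp [conjAct, mul_assoc]

lemma conjHom_apply (w : W) (f : NN W) (u : W) : conjHom w f u = f (w⁻¹ * u * w) := rfl




open scoped Classical in
noncomputable def delta (x : W) : NN W := fun u => if u = x then Multiplicative.ofAdd 1 else 1

lemma conjHom_delta (w x : W) : conjHom w (delta x) = delta (w * x * w⁻¹) := by
  funext u
  simp only [conjHom_apply, delta]
  congr 1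
  simp only [eq_iff_iff]
  constructor
  · intro h; rw [← h]; group
  · intro h; rw [h]; group

abbrev GG (cs : CoxeterSystem M W) := (NN W) ⋊[(conjHom : W →* MulAut (NN W))] W

noncomputable def gen (i : B) : GG cs := ⟨delta (s i), s i⟩

lemma sdp_pow {N G : Type*} [CommGroup N] [Group G] (φ : G →* MulAut N)
    (n : N) (g : G) (k : ℕ) :
    (⟨n, g⟩ : N ⋊[φ] G) ^ k = ⟨∏ t ∈ Finset.range k, φ (g ^ t) n, g ^ k⟩ := by
  induction k with
  | zero => ext <;> simp
  | succ k ih =>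
    rw [pow_succ', ih, SemidirectProduct.mul_def]
    ext
    · show n * (φ g) (∏ t ∈ Finset.range k, φ (g ^ t) n) = _
      rw [Finset.prod_range_succ']
      have h1 : (φ g) (∏ t ∈ Finset.range k, φ (g ^ t) n) =
          ∏ t ∈ Finset.range k, φ (g ^ (t + 1)) n := by
        rw [map_prod (φ g)]
        apply Finset.prod_congr rfl
        intro t _
        show (φ g) ((φ (g ^ t)) n) = _
        rw [pow_succ', map_mul]
        rfl
      rw [h1, mul_comm]
      congr 1
      simp
    · show g * g ^ k = g ^ (k + 1)
      rw [pow_succ']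


lemma prod_pair_eq_prod_range {Nc : Type*} [CommMonoid Nc] (f : ℕ → Nc) (m : ℕ) :
    ∏ t ∈ Finset.range m, (f (2 * t) * f (2 * t + 1)) = ∏ k ∈ Finset.range (2 * m), f k := by
  induction m with
  | zero => simp
  | succ m ih =>
    rw [Finset.prod_range_succ, ih]
    have h2 : 2 * (m + 1) = (2 * m) + 1 + 1 := by ring
    rw [h2, Finset.prod_range_succ, Finset.prod_range_succ, mul_assoc]

omit [Group W] in
lemma nn_sq (x : NN W) : x * x = 1 := by
  funext u
  exact mult_sq (x u)

section GroupLemmas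

variable {G : Type*} [Group G] {a b : G}

lemma inv_invol (ha : a * a = 1) : a⁻¹ = a := by
  rw [← mul_one a⁻¹, ← ha, ← mul_assoc, inv_mul_cancel, one_mul]

lemma pow_conj_invol (ha : a * a = 1) (hb : b * b = 1) (t : ℕ) :
    (a * b) ^ t * a = a * ((a * b) ^ t)⁻¹ := by
  have hp : a * (a * b) * a⁻¹ = (a * b)⁻¹ := by
    rw [inv_invol ha, mul_inv_rev, inv_invol ha, inv_invol hb]
    calc a * (a * b) * a = (a * a) * (b * a) := by group
      _ = b * a := by rw [ha, one_mul]
  have hpt : a * (a * b) ^ t * a⁻¹ = ((a * b) ^ t)⁻¹ := by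
    rw [← conj_pow, hp, inv_pow]
  conv_rhs => rw [← hpt, inv_invol ha, ← mul_assoc, ← mul_assoc, ha, one_mul]

lemma conj_idx_one (ha : a * a = 1) (hb : b * b = 1) (t : ℕ) :
    (a * b) ^ t * a * ((a * b) ^ t)⁻¹ = (a * b) ^ (2 * t) * a := by
  calc (a * b) ^ t * a * ((a * b) ^ t)⁻¹
      = (a * b) ^ t * (a * ((a * b) ^ t)⁻¹) := by rw [mul_assoc]
    _ = (a * b) ^ t * ((a * b) ^ t * a) := by rw [← pow_conj_invol ha hb]
    _ = (a * b) ^ (2 * t) * a := by rw [two_mul, pow_add]; group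

lemma conj_idx_two (ha : a * a = 1) (hb : b * b = 1) (t : ℕ) :
    (a * b) ^ t * (a * b * a⁻¹) * ((a * b) ^ t)⁻¹ = (a * b) ^ (2 * t + 1) * a := by
  have h1 : a * b * a⁻¹ = (a * b) * a := by rw [inv_invol ha]
  calc (a * b) ^ t * (a * b * a⁻¹) * ((a * b) ^ t)⁻¹
      = (a * b) ^ (t + 1) * (a * ((a * b) ^ t)⁻¹) := by rw [h1, pow_succ]; group
    _ = (a * b) ^ (t + 1) * ((a * b) ^ t * a) := by rw [← pow_conj_invol ha hb]
    _ = (a * b) ^ (2 * t + 1) * a := by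
        rw [(by ring : 2 * t + 1 = (t + 1) + t), pow_add]
        group

end GroupLemmas

set_option maxHeartbeats 1000000 in
lemma gen_liftable : M.IsLiftable (gen cs) := by
  intro i j
  show ((⟨delta (s i), s i⟩ : GG cs) * ⟨delta (s j), s j⟩) ^ M i j = 1
  rw [SemidirectProduct.mul_def, sdp_pow]
  have hp : (s i * s j) ^ M i j = 1 := cs.simple_mul_simple_pow i j
  have ha : s i * s i = 1 := cs.simple_mul_simple_self i
  have hb : s j * s j = 1 := cs.simple_mul_simple_self j
  refine SemidirectProduct.ext ?_ ?_
  swap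
  · exact hp
  simp only [SemidirectProduct.one_left]
  have key : ∀ t : ℕ, (conjHom ((s i * s j) ^ t))
      (delta (s i) * conjHom (s i) (delta (s j)))
      = delta ((s i * s j) ^ (2 * t) * s i) * delta ((s i * s j) ^ (2 * t + 1) * s i) := by
    intro t
    rw [conjHom_delta, map_mul, conjHom_delta, conjHom_delta]
    rw [conj_idx_one ha hb, conj_idx_two ha hb]
  calc (∏ t ∈ Finset.range (M i j), (conjHom ((s i * s j) ^ t))
      (delta (s i) * conjHom (s i) (delta (s j))))
      = ∏ t ∈ Finset.range (M i j),
          (delta ((s i * s j) ^ (2 * t) * s i) * delta ((s i * s j) ^ (2 * t + 1) * s i)) :=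
        Finset.prod_congr rfl fun t _ => key t
    _ = ∏ k ∈ Finset.range (2 * M i j), delta ((s i * s j) ^ k * s i) :=
        prod_pair_eq_prod_range (fun k => delta ((s i * s j) ^ k * s i)) (M i j)
    _ = ∏ k ∈ Finset.range (M i j + M i j), delta ((s i * s j) ^ k * s i) := by rw [two_mul]
    _ = (∏ k ∈ Finset.range (M i j), delta ((s i * s j) ^ k * s i)) *
        ∏ k ∈ Finset.range (M i j), delta ((s i * s j) ^ (M i j + k) * s i) :=
        Finset.prod_range_add _ _ _
    _ = (∏ k ∈ Finset.range (M i j), delta ((s i * s j) ^ k * s i)) *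
        ∏ k ∈ Finset.range (M i j), delta ((s i * s j) ^ k * s i) := by
        congr 1
        apply Finset.prod_congr rfl
        intro k _
        rw [pow_add, hp, one_mul]
    _ = 1 := nn_sq _

noncomputable def klHom : W →* GG cs := cs.lift ⟨gen cs, gen_liftable cs⟩

@[simp] lemma klHom_simple (i : B) : klHom cs (s i) = gen cs i :=
  cs.lift_apply_simple (gen_liftable cs) i

lemma klHom_right (w : W) : (klHom cs w).right = w := by
  have h : (SemidirectProduct.rightHom.comp (klHom cs)) = MonoidHom.id W := by
    apply cs.ext_simple
    intro i
    rw [MonoidHom.comp_apply, klHom_simple]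
    rfl
  exact DFunLike.congr_fun h w

/-- The reflection cocycle. -/
noncomputable def nf (w : W) : NN W := (klHom cs w).left

lemma nf_one : nf cs 1 = 1 := by
  unfold nf
  rw [map_one]
  rfl

lemma nf_mul (u v : W) (t : W) : nf cs (u * v) t = nf cs u t * nf cs v (u⁻¹ * t * u) := by
  unfold nf
  rw [map_mul, SemidirectProduct.mul_left, klHom_right]
  rfl

lemma nf_simple (i : B) : nf cs (s i) = delta (s i) := by
  unfold nf
  rw [klHom_simple]
  rfl


lemma mult_cases (x : Multiplicative (ZMod 2)) : x = 1 ∨ x = Multiplicative.ofAdd 1 := by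
  revert x; decide

lemma mult_inv (x : Multiplicative (ZMod 2)) : x⁻¹ = x := by
  revert x; decide

lemma ofAdd_one_ne_one : (Multiplicative.ofAdd (1 : ZMod 2)) ≠ 1 := by decide

lemma nf_inv (v r : W) : nf cs v⁻¹ r = nf cs v (v * r * v⁻¹) := by
  have h := nf_mul cs v v⁻¹ (v * r * v⁻¹)
  rw [mul_inv_cancel, nf_one] at h
  have h2 : v⁻¹ * (v * r * v⁻¹) * v = r := by group
  rw [h2, Pi.one_apply] at h
  have h3 := (inv_eq_of_mul_eq_one_left h.symm)
  rw [← h3, mult_inv]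

lemma nf_refl_self {t : W} (ht : cs.IsReflection t) :
    nf cs t t = Multiplicative.ofAdd 1 := by
  obtain ⟨v, i, rfl⟩ := ht
  have h1 : v * s i * v⁻¹ = v * (s i * v⁻¹) := by group
  nth_rw 1 [h1]
  nth_rw 1 [h1]
  rw [nf_mul]
  have h2 : v⁻¹ * (v * (s i * v⁻¹)) * v = s i := by group
  rw [h2, nf_mul, nf_simple]
  have h3 : (s i)⁻¹ * (s i) * (s i) = s i := by group
  rw [h3, nf_inv]
  have h4 : v * (s i * v⁻¹) = v * s i * v⁻¹ := by group
  rw [h4]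
  have h5 : delta (W := W) (s i) (s i) = Multiplicative.ofAdd 1 := by
    unfold delta; rw [if_pos rfl]
  rw [h5]
  rcases mult_cases (nf cs v (v * s i * v⁻¹)) with h | h <;> rw [h] <;> decide

lemma nf_mem_leftInvSeq (ω : List B) (r : W)
    (h : nf cs (π ω) r = Multiplicative.ofAdd 1) : r ∈ cs.leftInvSeq ω := by
  induction ω generalizing r with
  | nil =>
    rw [cs.wordProd_nil, nf_one] at h
    exact absurd h.symm ofAdd_one_ne_one
  | cons i ω ih =>
    rw [cs.wordProd_cons, nf_mul, nf_simple] at h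
    show r ∈ s i :: List.map (MulAut.conj (s i)) (cs.leftInvSeq ω)
    by_cases hr : r = s i
    · exact hr ▸ List.mem_cons_self
    · have hd : delta (W := W) (s i) r = 1 := by unfold delta; rw [if_neg hr]
      rw [hd, one_mul] at h
      have hmem := ih _ h
      refine List.mem_cons_of_mem _ ?_
      have hc : MulAut.conj (s i) ((s i)⁻¹ * r * (s i)) = r := by
        simp only [MulAut.conj_apply]; group
      rw [← hc]
      exact List.mem_map_of_mem hmem

lemma nf_inversion {t : W} (ht : cs.IsReflection t) (w : W)
    (h : nf cs w t = Multiplicative.ofAdd 1) : ℓ (t * w) < ℓ w := by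
  obtain ⟨ω, hred, rfl⟩ := cs.exists_reduced_word' w
  have hmem := nf_mem_leftInvSeq cs ω t h
  exact (cs.isLeftInversion_of_mem_leftInvSeq hred hmem).2

lemma inversion_nf {t : W} (ht : cs.IsReflection t) (w : W)
    (h : ℓ (t * w) < ℓ w) : nf cs w t = Multiplicative.ofAdd 1 := by
  have hw : w = t * (t * w) := by rw [← mul_assoc, ht.mul_self, one_mul]
  have hc : nf cs w t = nf cs t t * nf cs (t * w) t := by
    nth_rw 1 [hw]
    rw [nf_mul]
    congr 2
    rw [ht.inv, ht.mul_self, one_mul]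
  have h0 : nf cs (t * w) t = 1 := by
    rcases mult_cases (nf cs (t * w) t) with h' | h'
    · exact h'
    · exfalso
      have h2 := nf_inversion cs ht (t * w) h'
      rw [← mul_assoc, ht.mul_self, one_mul] at h2
      omega
  rw [hc, h0, mul_one, nf_refl_self cs ht]

/-- Left strong exchange. -/
lemma strong_exchange_left {t : W} (ht : cs.IsReflection t) (ω : List B)
    (h : ℓ (t * π ω) < ℓ (π ω)) :
    ∃ j, j < ω.length ∧ t * π ω = π (ω.eraseIdx j) := by
  have hnf := inversion_nf cs ht (π ω) h
  have hmem := nf_mem_leftInvSeq cs ω t hnf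
  obtain ⟨j, hj, hje⟩ := List.mem_iff_getElem.mp hmem
  rw [cs.length_leftInvSeq] at hj
  refine ⟨j, hj, ?_⟩
  rw [← cs.getD_leftInvSeq_mul_wordProd ω j]
  congr 1
  rw [List.getD_eq_getElem _ 1 (by rw [cs.length_leftInvSeq]; exact hj)]
  exact hje.symm

/-- Right strong exchange (sublist form). -/
lemma strong_exchange_right {t : W} (ht : cs.IsReflection t) (ω : List B)
    (h : ℓ (π ω * t) < ℓ (π ω)) :
    ∃ σ, σ.Sublist ω ∧ σ.length + 1 = ω.length ∧ π ω * t = π σ := by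
  have h1 : ℓ (t * π ω.reverse) < ℓ (π ω.reverse) := by
    rw [cs.wordProd_reverse]
    have e1 : t * (π ω)⁻¹ = (π ω * t)⁻¹ := by rw [mul_inv_rev, ht.inv]
    rw [e1, cs.length_inv, cs.length_inv]
    exact h
  obtain ⟨j, hj, hje⟩ := strong_exchange_left cs ht ω.reverse h1
  refine ⟨(ω.reverse.eraseIdx j).reverse, ?_, ?_, ?_⟩
  · have := (List.eraseIdx_sublist ω.reverse j).reverse
    rwa [List.reverse_reverse] at this
  · rw [List.length_reverse]
    rw [List.length_eraseIdx_add_one (by rwa [List.length_reverse] at hj ⊢)]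
    exact ω.length_reverse
  · rw [cs.wordProd_reverse, ← hje, cs.wordProd_reverse, mul_inv_rev, inv_inv, ht.inv]


namespace Bruhat

lemma refl (w : W) : BruhatLE cs w w := Relation.ReflTransGen.refl

lemma trans {a b c : W} (h1 : BruhatLE cs a b) (h2 : BruhatLE cs b c) :
    BruhatLE cs a c := Relation.ReflTransGen.trans h1 h2

lemma step {a : W} {t : W} (ht : cs.IsReflection t) (h : ℓ a < ℓ (a * t)) :
    BruhatLE cs a (a * t) :=
  Relation.ReflTransGen.single ⟨⟨t, ht, rfl⟩, h⟩

lemma step_left {a : W} {t : W} (ht : cs.IsReflection t) (h : ℓ a < ℓ (t * a)) :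
    BruhatLE cs a (t * a) := by
  have h1 : t * a = a * (a⁻¹ * t * a) := by group
  have h2 : cs.IsReflection (a⁻¹ * t * a) := by
    have := ht.conj a⁻¹
    rwa [inv_inv] at this
  rw [h1]
  exact step cs h2 (by rw [← h1]; exact h)

lemma length_le {u w : W} (h : BruhatLE cs u w) : ℓ u ≤ ℓ w := by
  induction h with
  | refl => exact le_refl _
  | tail _ h2 ih => exact le_trans ih (le_of_lt h2.2)

lemma length_lt {u w : W} (h : BruhatLE cs u w) (hne : u ≠ w) : ℓ u < ℓ w := by
  rcases Relation.ReflTransGen.cases_tail h with h' | ⟨c, hc, hstep⟩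
  · exact absurd h'.symm hne
  · exact lt_of_le_of_lt (length_le cs hc) hstep.2

lemma lt_iff {u w : W} : BruhatLT cs u w ↔ BruhatLE cs u w ∧ ℓ u < ℓ w := by
  constructor
  · intro ⟨h, hne⟩; exact ⟨h, length_lt cs h hne⟩
  · intro ⟨h, hl⟩; exact ⟨h, fun he => by rw [he] at hl; omega⟩

/-- one-deletion from a reduced word goes down in Bruhat order -/
lemma eraseIdx_le {χ : List B} (hred : cs.IsReduced χ) (k : ℕ) (hk : k < χ.length) :
    BruhatLE cs (π (χ.eraseIdx k)) (π χ) := by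
  set t := (cs.rightInvSeq χ).getD k 1 with hht
  have hmem : t ∈ cs.rightInvSeq χ := by
    rw [hht, List.getD_eq_getElem _ 1 (by rw [cs.length_rightInvSeq]; exact hk)]
    exact List.getElem_mem _
  have hinv := cs.isRightInversion_of_mem_rightInvSeq hred hmem
  have he : π (χ.eraseIdx k) = π χ * t := (cs.wordProd_mul_getD_rightInvSeq χ k).symm
  have ht2 : π χ = π (χ.eraseIdx k) * t := by
    rw [he, mul_assoc, hinv.1.mul_self, mul_one]
  have hlen : ℓ (π (χ.eraseIdx k)) < ℓ (π (χ.eraseIdx k) * t) := by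
    rw [← ht2, he]
    exact hinv.2
  rw [ht2]
  exact step cs hinv.1 hlen

lemma sublist_eraseIdx {σ χ : List B} (h : σ.Sublist χ) (hl : σ.length + 1 = χ.length) :
    ∃ k, k < χ.length ∧ σ = χ.eraseIdx k := by
  induction h with
  | slnil => simp at hl
  | @cons l₁ l₂ a h ih =>
    rcases Nat.eq_or_lt_of_le (List.Sublist.length_le h) with he | hlt
    · exact ⟨0, by simp, by rw [List.eraseIdx_cons_zero, List.Sublist.eq_of_length h he]⟩
    · exfalso
      simp only [List.length_cons] at hl
      omega
  | @cons_cons l₁ l₂ a h ih =>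
    simp only [List.length_cons] at hl
    obtain ⟨k, hk, hke⟩ := ih (by omega)
    exact ⟨k + 1, by simp; omega, by rw [List.eraseIdx_cons_succ, hke]⟩

/-- sublist of one shorter length of a reduced word goes down -/
lemma sublist_le {σ χ : List B} (hred : cs.IsReduced χ) (h : σ.Sublist χ)
    (hl : σ.length + 1 = χ.length) : BruhatLE cs (π σ) (π χ) := by
  obtain ⟨k, hk, rfl⟩ := sublist_eraseIdx h hl
  exact eraseIdx_le cs hred k hk


lemma length_simple_mul_cases (w : W) (i : B) :
    ℓ (s i * w) = ℓ w + 1 ∨ ℓ (s i * w) + 1 = ℓ w := cs.length_simple_mul w i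

theorem lift_pair : ∀ n : ℕ,
    (∀ w, ℓ w ≤ n → ∀ i, ℓ (s i * w) < ℓ w →
      ∀ y, BruhatLE cs y w → BruhatLE cs (s i * y) w) ∧
    (∀ u, ℓ u ≤ n → ∀ i, ℓ u < ℓ (s i * u) →
      ∀ y, BruhatLE cs y u → ℓ y < ℓ (s i * y) →
        BruhatLE cs (s i * y) (s i * u)) := by
  intro n
  induction n using Nat.strong_induction_on with
  | _ n ih =>
  constructor
  · -- P2'
    intro w hw i hd y hyw
    by_cases hy : ℓ (s i * y) < ℓ y
    · have h1 : BruhatLE cs (s i * y) y := by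
        have h2 : y = s i * (s i * y) := by
          rw [← mul_assoc, cs.simple_mul_simple_self, one_mul]
        nth_rw 2 [h2]
        exact step_left cs (cs.isReflection_simple i) (by rw [← h2]; exact hy)
      exact trans cs h1 hyw
    · have hy' : ℓ y < ℓ (s i * y) := by
        rcases length_simple_mul_cases cs y i with h | h <;> omega
      rcases Relation.ReflTransGen.cases_tail hyw with he | ⟨z, hyz, ⟨⟨t, ht, hwzt⟩, hlzw⟩⟩
      · exfalso; rw [he] at hd; omega
      · by_cases hsz : ℓ (s i * z) < ℓ z
        · -- P2' at z
          have h1 := ((ih (ℓ z) (by omega)).1) z (le_refl _) i hsz y hyz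
          have h2 : BruhatLE cs z w := by
            rw [hwzt]; exact step cs ht (by rw [← hwzt]; exact hlzw)
          exact trans cs h1 h2
        · have hsz' : ℓ z < ℓ (s i * z) := by
            rcases length_simple_mul_cases cs z i with h | h <;> omega
          have h1 := ((ih (ℓ z) (by omega)).2) z (le_refl _) i hsz' y hyz hy'
          -- now show s i * z ≤ w
          have hw' : ℓ (s i * w) + 1 = ℓ w := by
            rcases length_simple_mul_cases cs w i with h | h <;> omega
          obtain ⟨χ, hχred, hχ⟩ := cs.exists_reduced_word' (s i * w)
          have hπ : π (i :: χ) = w := by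
            rw [cs.wordProd_cons, ← hχ, ← mul_assoc, cs.simple_mul_simple_self, one_mul]
          have hωred : cs.IsReduced (i :: χ) := by
            show ℓ (π (i :: χ)) = (i :: χ).length
            rw [hπ, List.length_cons, ← hχred, ← hχ]
            omega
          have hzt : π (i :: χ) * t = z := by
            rw [hπ, hwzt, mul_assoc, ht.mul_self, mul_one]
          obtain ⟨σ, hσsub, hσlen, hσeq⟩ := strong_exchange_right cs ht (i :: χ)
            (by rw [hzt, hπ]; exact hlzw)
          rw [hzt] at hσeq
          have hw'w : BruhatLE cs (s i * w) w := by
            have h2 : w = s i * (s i * w) := by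
              rw [← mul_assoc, cs.simple_mul_simple_self, one_mul]
            nth_rw 2 [h2]
            exact step_left cs (cs.isReflection_simple i) (by rw [← h2]; omega)
          rcases List.sublist_cons_iff.mp hσsub with hcase | ⟨ρ, hρ, hρsub⟩
          · -- σ = χ, z = s i * w
            have hσχ : σ = χ := List.Sublist.eq_of_length hcase
              (by simp only [List.length_cons] at hσlen; omega)
            have hz : z = s i * w := by rw [hσeq, hσχ, hχ]
            have hsiz : s i * z = w := by
              rw [hz, ← mul_assoc, cs.simple_mul_simple_self, one_mul]
            rw [hsiz] at h1
            exact h1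
          · -- z = s i * π ρ
            have hz : s i * z = π ρ := by
              rw [hσeq, hρ, cs.wordProd_cons, ← mul_assoc, cs.simple_mul_simple_self, one_mul]
            have hρχ : BruhatLE cs (π ρ) (π χ) := by
              apply sublist_le cs hχred hρsub
              rw [hρ] at hσlen
              simp only [List.length_cons] at hσlen
              omega
            rw [← hχ] at hρχ
            rw [hz] at h1
            exact trans cs h1 (trans cs hρχ hw'w)
  · -- C
    intro u hu i hsu y hyu hsy
    rcases Relation.ReflTransGen.cases_tail hyu with he | ⟨z, hyz, ⟨⟨t, ht, hwzt⟩, hlzw⟩⟩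
    · rw [he]; exact Relation.ReflTransGen.refl
    · have hsu1 : ℓ (s i * u) = ℓ u + 1 := by
        rcases length_simple_mul_cases cs u i with h | h <;> omega
      by_cases hsz : ℓ z < ℓ (s i * z)
      · have h1 := ((ih (ℓ z) (by omega)).2) z (le_refl _) i hsz y hyz hsy
        have hsz1 : ℓ (s i * z) = ℓ z + 1 := by
          rcases length_simple_mul_cases cs z i with h | h <;> omega
        have h2 : BruhatLE cs (s i * z) (s i * u) := by
          have he2 : s i * u = (s i * z) * t := by rw [hwzt]; group
          rw [he2]
          exact step cs ht (by rw [← he2]; omega)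
        exact trans cs h1 h2
      · have hsz' : ℓ (s i * z) < ℓ z := by
          rcases length_simple_mul_cases cs z i with h | h <;> omega
        have h1 := ((ih (ℓ z) (by omega)).1) z (le_refl _) i hsz' y hyz
        have h2 : BruhatLE cs z u := by
          rw [hwzt]; exact step cs ht (by rw [← hwzt]; exact hlzw)
        have h3 : BruhatLE cs u (s i * u) :=
          step_left cs (cs.isReflection_simple i) hsu
        exact trans cs h1 (trans cs h2 h3)

/-- The main lifting corollary used in the KL induction. -/
lemma lift_final {x' y : W} (i : B) (hx : ℓ x' < ℓ (s i * x')) (hy : BruhatLT cs y x') :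
    BruhatLT cs y (s i * x') ∧ BruhatLT cs (s i * y) (s i * x') := by
  have hlen : ℓ y < ℓ x' := length_lt cs hy.1 hy.2
  have hx1 : ℓ (s i * x') = ℓ x' + 1 := by
    rcases length_simple_mul_cases cs x' i with h | h <;> omega
  have hxx : BruhatLE cs x' (s i * x') := step_left cs (cs.isReflection_simple i) hx
  constructor
  · exact (lt_iff cs).mpr ⟨trans cs hy.1 hxx, by omega⟩
  · by_cases hsy : ℓ (s i * y) < ℓ y
    · have h1 : BruhatLE cs (s i * y) y := by
        have h2 : y = s i * (s i * y) := by
          rw [← mul_assoc, cs.simple_mul_simple_self, one_mul]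
        nth_rw 2 [h2]
        exact step_left cs (cs.isReflection_simple i) (by rw [← h2]; exact hsy)
      refine (lt_iff cs).mpr ⟨trans cs h1 (trans cs hy.1 hxx), by omega⟩
    · have hsy' : ℓ y < ℓ (s i * y) := by
        rcases length_simple_mul_cases cs y i with h | h <;> omega
      have hsy1 : ℓ (s i * y) = ℓ y + 1 := by
        rcases length_simple_mul_cases cs y i with h | h <;> omega
      have h1 := ((lift_pair cs (ℓ x')).2) x' (le_refl _) i hx y hy.1 hsy'
      exact (lt_iff cs).mpr ⟨h1, by omega⟩

lemma self_lt_simple_mul {x' : W} (i : B) (hx : ℓ x' < ℓ (s i * x')) :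
    BruhatLT cs x' (s i * x') :=
  (lt_iff cs).mpr ⟨step_left cs (cs.isReflection_simple i) hx, hx⟩

end Bruhat

end KLAux

open scoped Classical
open HeckeAlg

namespace KLAux

open LaurentPolynomial Polynomial

lemma isVPol_zero : IsVPol 0 := ⟨0, by simp⟩

lemma isVPol_add {p q : LaurentPolynomial ℤ} (hp : IsVPol p) (hq : IsVPol q) :
    IsVPol (p + q) := by
  obtain ⟨a, rfl⟩ := hp
  obtain ⟨b, rfl⟩ := hq
  exact ⟨a + b, by rw [map_add, add_mul]⟩

lemma isVPol_zsmul {p : LaurentPolynomial ℤ} (m : ℤ) (hp : IsVPol p) : IsVPol (m • p) := by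
  obtain ⟨a, rfl⟩ := hp
  exact ⟨m • a, by rw [map_zsmul, smul_mul_assoc]⟩

lemma isVPol_T1 : IsVPol (T 1 : LaurentPolynomial ℤ) := ⟨1, by simp⟩

lemma isVPol_mul_T1 {p : LaurentPolynomial ℤ} (hp : IsVPol p) : IsVPol (p * T 1) := by
  obtain ⟨a, rfl⟩ := hp
  refine ⟨a * X, ?_⟩
  rw [map_mul, Polynomial.toLaurent_X, mul_assoc]

lemma toLaurent_coeff (q : Polynomial ℤ) (k : ℕ) :
    (Polynomial.toLaurent q).coeff ((k : ℕ) : ℤ) = q.coeff k := by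
  rw [LaurentPolynomial.coeff_toLaurent]
  exact Finsupp.mapDomain_apply Nat.castEmbedding.injective _ k

/-- the key arithmetic fact: if `p ∈ vℤ[v]` then `p v⁻¹ - μ(p) ∈ vℤ[v]`. -/
lemma isVPol_shift {p : LaurentPolynomial ℤ} (hp : IsVPol p) :
    IsVPol (p * T (-1) - (muCoeff p) • (1 : LaurentPolynomial ℤ)) := by
  obtain ⟨q, rfl⟩ := hp
  have h1 : Polynomial.toLaurent q * T 1 * T (-1) = Polynomial.toLaurent q := by
    rw [mul_T_assoc]
    norm_num
  have h2 : muCoeff (Polynomial.toLaurent q * T 1) = q.coeff 0 := by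
    unfold muCoeff
    have : Polynomial.toLaurent q * T 1 = Polynomial.toLaurent (q * X) := by
      rw [map_mul, Polynomial.toLaurent_X]
    rw [this, (by norm_num : (1 : ℤ) = ((1 : ℕ) : ℤ)), toLaurent_coeff, Polynomial.coeff_mul_X]
  rw [h1, h2]
  refine ⟨q.divX, ?_⟩
  have h3 : (q.coeff 0) • (1 : LaurentPolynomial ℤ) = Polynomial.toLaurent (Polynomial.C (q.coeff 0)) := by
    rw [Polynomial.toLaurent_C, zsmul_one]
    rw [← map_intCast (LaurentPolynomial.C : ℤ →+* LaurentPolynomial ℤ) (q.coeff 0), Int.cast_id]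
  rw [h3, ← map_sub]
  have h4 : q - Polynomial.C (q.coeff 0) = q.divX * X := by
    have := Polynomial.divX_mul_X_add q
    linear_combination -this
  rw [h4, map_mul, Polynomial.toLaurent_X]

end KLAux


namespace KLAux

open LaurentPolynomial

variable {B W : Type*} [Group W] {M : CoxeterMatrix B} {cs : CoxeterSystem M W}
variable {A : Type*} [Ring A] [Algebra (LaurentPolynomial ℤ) A] (ha : HeckeAlg cs A)

local notation "R" => LaurentPolynomial ℤ
local notation "φ" => algebraMap (LaurentPolynomial ℤ) A

lemma H_def' (x : W) : ha.H x = (T (cs.length x : ℤ) : R) • ha.Tb x := by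
  unfold HeckeAlg.H
  rw [Algebra.smul_def]

lemma h_one : ha.H 1 = 1 := by
  rw [H_def', cs.length_one, ha.Tb_one]
  norm_num [T_zero]

lemma H_mul_up (i : B) (y : W) (h : cs.length y < cs.length (cs.simple i * y)) :
    ha.H (cs.simple i) * ha.H y = ha.H (cs.simple i * y) := by
  have hl : cs.length (cs.simple i * y) = cs.length (cs.simple i) + cs.length y := by
    rw [cs.length_simple]
    rcases cs.length_simple_mul y i with h' | h' <;> omega
  rw [H_def', H_def', H_def', ← ha.Tb_mul _ _ hl]
  rw [smul_mul_assoc, mul_smul_comm, smul_smul, ← T_add]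
  congr 2
  rw [hl, cs.length_simple]
  push_cast
  ring

lemma Tb_simple_sq (i : B) : ha.Tb (cs.simple i) * ha.Tb (cs.simple i) =
    (T (-2) : R) • ha.Tb (cs.simple i) - ha.Tb (cs.simple i) + φ (T (-2)) := by
  have hq := ha.Tb_quadratic i
  set t := ha.Tb (cs.simple i) with hht
  have expand : (t + 1) * (t - φ (T (-2))) =
      t * t - t * φ (T (-2)) + t - φ (T (-2)) := by noncomm_ring
  rw [expand] at hq
  have hc : t * φ (T (-2)) = (T (-2) : R) • t := by
    rw [← Algebra.commutes, Algebra.smul_def]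
  calc t * t = (t * t - t * φ (T (-2)) + t - φ (T (-2)))
        + t * φ (T (-2)) - t + φ (T (-2)) := by noncomm_ring
    _ = (T (-2) : R) • t - t + φ (T (-2)) := by rw [hq, hc]; noncomm_ring

lemma H_simple_sq (i : B) : ha.H (cs.simple i) * ha.H (cs.simple i) =
    ((T (-1) - T 1 : R)) • ha.H (cs.simple i) + 1 := by
  rw [H_def', cs.length_simple]
  rw [smul_mul_assoc, mul_smul_comm, smul_smul, Tb_simple_sq]
  rw [smul_add, smul_sub, smul_smul, smul_smul, sub_mul, sub_smul]
  have e1 : (T ((1:ℕ) : ℤ) * T ((1:ℕ):ℤ) * T (-2) : R) = 1 := by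
    rw [← T_add, ← T_add]
    norm_num [T_zero]
  have e2 : (T ((1:ℕ) : ℤ) * T ((1:ℕ):ℤ) : R) • (φ (T (-2)) : A) = 1 := by
    rw [Algebra.smul_def, ← map_mul, e1, map_one]
  rw [e2, e1, one_smul]
  have e3 : (T (-1) * T ((1:ℕ):ℤ) : R) = 1 := by
    rw [← T_add]; norm_num [T_zero]
  rw [e3, one_smul]
  have e4 : (T (1:ℤ) * T ((1:ℕ):ℤ) : R) = T ((1:ℕ):ℤ) * T ((1:ℕ):ℤ) := by norm_num
  rw [e4]

lemma H_mul_down (i : B) (y : W) (h : cs.length (cs.simple i * y) < cs.length y) :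
    ha.H (cs.simple i) * ha.H y =
      ha.H (cs.simple i * y) + ((T (-1) - T 1 : R)) • ha.H y := by
  have hy : ha.H y = ha.H (cs.simple i) * ha.H (cs.simple i * y) := by
    rw [H_mul_up ha i (cs.simple i * y)
      (by rw [cs.simple_mul_simple_cancel_left]; exact h), cs.simple_mul_simple_cancel_left]
  calc ha.H (cs.simple i) * ha.H y
      = (ha.H (cs.simple i) * ha.H (cs.simple i)) * ha.H (cs.simple i * y) := by
        rw [hy, mul_assoc]
    _ = ((T (-1) - T 1 : R)) • (ha.H (cs.simple i) * ha.H (cs.simple i * y))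
        + ha.H (cs.simple i * y) := by
        rw [H_simple_sq, add_mul, one_mul, smul_mul_assoc]
    _ = ha.H (cs.simple i * y) + ((T (-1) - T 1 : R)) • ha.H y := by
        rw [← hy, add_comm]

lemma Cs_mul_up (i : B) (y : W) (h : cs.length y < cs.length (cs.simple i * y)) :
    ha.Cs i * ha.H y = ha.H (cs.simple i * y) + (T 1 : R) • ha.H y := by
  unfold HeckeAlg.Cs
  rw [add_mul, H_mul_up ha i y h, ← Algebra.smul_def]

lemma Cs_mul_down (i : B) (y : W) (h : cs.length (cs.simple i * y) < cs.length y) :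
    ha.Cs i * ha.H y = ha.H (cs.simple i * y) + (T (-1) : R) • ha.H y := by
  unfold HeckeAlg.Cs
  rw [add_mul, H_mul_down ha i y h, ← Algebra.smul_def]
  rw [add_assoc, sub_smul]
  congr 1
  abel

lemma H_simple_mul_invr (i : B) :
    ha.H (cs.simple i) * (ha.H (cs.simple i) - φ (T (-1) - T 1)) = 1 := by
  rw [mul_sub, H_simple_sq, ← Algebra.commutes (T (-1) - T 1 : R), ← Algebra.smul_def]
  abel

variable (bar : ha.Bar)

lemma bar_H_simple (i : B) :
    bar.d (ha.H (cs.simple i)) = ha.H (cs.simple i) - φ (T (-1) - T 1) := by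
  have h1 := bar.d_H_mul (cs.simple i)
  rw [cs.inv_simple] at h1
  calc bar.d (ha.H (cs.simple i))
      = bar.d (ha.H (cs.simple i)) *
        (ha.H (cs.simple i) * (ha.H (cs.simple i) - φ (T (-1) - T 1))) := by
        rw [H_simple_mul_invr, mul_one]
    _ = (bar.d (ha.H (cs.simple i)) * ha.H (cs.simple i)) *
        (ha.H (cs.simple i) - φ (T (-1) - T 1)) := by rw [mul_assoc]
    _ = ha.H (cs.simple i) - φ (T (-1) - T 1) := by rw [h1, one_mul]

lemma bar_Cs (i : B) : bar.d (ha.Cs i) = ha.Cs i := by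
  unfold HeckeAlg.Cs
  rw [map_add, bar_H_simple, bar.d_scalar 1, map_sub]
  abel


/-- `c` is in the `vℤ[v]`-span of `H_y` for `y` satisfying `P`. -/
def InSp (P : W → Prop) (c : A) : Prop :=
  ∃ f : W →₀ LaurentPolynomial ℤ, (∀ y, IsVPol (f y)) ∧ (∀ y ∈ f.support, P y) ∧
    c = f.sum fun y r => r • ha.H y

lemma insp_zero (P : W → Prop) : InSp ha P 0 :=
  ⟨0, fun _ => isVPol_zero, by simp, by rw [Finsupp.sum_zero_index]⟩

lemma insp_add {P : W → Prop} {c₁ c₂ : A} (h₁ : InSp ha P c₁) (h₂ : InSp ha P c₂) :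
    InSp ha P (c₁ + c₂) := by
  obtain ⟨f₁, hv₁, hs₁, rfl⟩ := h₁
  obtain ⟨f₂, hv₂, hs₂, rfl⟩ := h₂
  refine ⟨f₁ + f₂, ?_, ?_, ?_⟩
  · intro y
    rw [Finsupp.add_apply]
    exact isVPol_add (hv₁ y) (hv₂ y)
  · intro y hy
    rcases Finset.mem_union.mp (Finsupp.support_add hy) with h | h
    · exact hs₁ y h
    · exact hs₂ y h
  · exact (Finsupp.sum_add_index' (fun y => zero_smul _ (ha.H y))
      (fun y r₁ r₂ => add_smul r₁ r₂ (ha.H y))).symm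

lemma insp_zsmul {P : W → Prop} (m : ℤ) {c : A} (h : InSp ha P c) : InSp ha P (m • c) := by
  obtain ⟨f, hv, hs, rfl⟩ := h
  refine ⟨m • f, ?_, ?_, ?_⟩
  · intro y
    rw [Finsupp.smul_apply]
    exact isVPol_zsmul m (hv y)
  · intro y hy
    exact hs y (Finsupp.support_smul hy)
  · rw [Finsupp.sum_smul_index' (fun y => zero_smul _ (ha.H y))]
    rw [Finsupp.smul_sum]
    apply Finsupp.sum_congr
    intro y _
    rw [smul_assoc]

lemma insp_sub {P : W → Prop} {c₁ c₂ : A} (h₁ : InSp ha P c₁) (h₂ : InSp ha P c₂) :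
    InSp ha P (c₁ - c₂) := by
  have := insp_add ha h₁ (insp_zsmul ha (-1) h₂)
  rwa [neg_smul, one_smul, ← sub_eq_add_neg] at this

lemma insp_single {P : W → Prop} (y : W) (r : LaurentPolynomial ℤ) (hr : IsVPol r)
    (hy : P y) : InSp ha P (r • ha.H y) := by
  refine ⟨Finsupp.single y r, ?_, ?_, ?_⟩
  · intro z
    rw [Finsupp.single_apply]
    split
    · exact hr
    · exact isVPol_zero
  · intro z hz
    have := Finsupp.support_single_subset hz
    rw [Finset.mem_singleton] at this
    rw [this]
    exact hy
  · exact (Finsupp.sum_single_index (h := fun z r => r • ha.H z) (zero_smul _ (ha.H y))).symm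

lemma insp_mono {P Q : W → Prop} (h : ∀ y, P y → Q y) {c : A} (hc : InSp ha P c) :
    InSp ha Q c := by
  obtain ⟨f, hv, hs, rfl⟩ := hc
  exact ⟨f, hv, fun y hy => h y (hs y hy), rfl⟩

lemma insp_sum {P : W → Prop} {ι : Type*} (S : Finset ι) (g : ι → A)
    (h : ∀ j ∈ S, InSp ha P (g j)) : InSp ha P (∑ j ∈ S, g j) := by
  classical
  induction S using Finset.cons_induction with
  | empty => rw [Finset.sum_empty]; exact insp_zero ha P
  | cons j S hj ih =>
    rw [Finset.sum_cons]
    exact insp_add ha (h j (Finset.mem_cons_self j S))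
      (ih fun k hk => h k (Finset.mem_cons_of_mem hk))

lemma bruhat_lt_trans {a b c : W} (h₁ : BruhatLT cs a b) (h₂ : BruhatLT cs b c) :
    BruhatLT cs a c := by
  rw [Bruhat.lt_iff] at h₁ h₂ ⊢
  exact ⟨Bruhat.trans cs h₁.1 h₂.1, lt_trans h₁.2 h₂.2⟩

open scoped Classical in
theorem kl_main : ∀ n : ℕ, ∀ x : W, cs.length x = n →
    ∃ c : A, bar.d c = c ∧ InSp ha (fun y => BruhatLT cs y x) (c - ha.H x) := by
  intro n
  induction n using Nat.strong_induction_on with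
  | _ n ih =>
  intro x hx
  by_cases hx1 : x = 1
  · refine ⟨1, map_one _, ?_⟩
    rw [hx1, h_one, sub_self]
    exact insp_zero ha _
  · obtain ⟨i, hdesc⟩ := cs.exists_leftDescent_of_ne_one hx1
    have hdesc' : cs.length (cs.simple i * x) < cs.length x := hdesc
    set x' := cs.simple i * x with hhx'
    have hxx' : cs.simple i * x' = x := by
      rw [hhx', cs.simple_mul_simple_cancel_left]
    have hlen : cs.length x' + 1 = cs.length x := by
      have h' := cs.length_simple_mul x i
      rw [← hhx'] at h'
      rcases h' with h' | h' <;> omega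
    have hup : cs.length x' < cs.length (cs.simple i * x') := by rw [hxx']; omega
    obtain ⟨c', hd', f', hv', hsupp', hc'⟩ := ih (cs.length x') (by omega) x' rfl
    have hc'' : c' = ha.H x' + f'.sum fun y r => r • ha.H y := by
      rw [← hc']; abel
    -- the lifting facts
    have hlift : ∀ y, BruhatLT cs y x' →
        BruhatLT cs y x ∧ BruhatLT cs (cs.simple i * y) x := by
      intro y hy
      have := Bruhat.lift_final cs i hup hy
      rwa [hxx'] at this
    have hx'x : BruhatLT cs x' x := by
      have := Bruhat.self_lt_simple_mul cs i hup
      rwa [hxx'] at this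
    -- KL elements below
    have hKL : ∀ y, ∃ cA : A, BruhatLT cs y x' →
        (bar.d cA = cA ∧ InSp ha (fun z => BruhatLT cs z y) (cA - ha.H y)) := by
      intro y
      by_cases h : BruhatLT cs y x'
      · have hly : cs.length y < cs.length x' := Bruhat.length_lt cs h.1 h.2
        obtain ⟨cA, h1, h2⟩ := ih (cs.length y) (by omega) y rfl
        exact ⟨cA, fun _ => ⟨h1, h2⟩⟩
      · exact ⟨0, fun h' => absurd h' h⟩
    choose cy hcy using hKL
    set D : Finset W := f'.support.filter (fun y => cs.length (cs.simple i * y) < cs.length y)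
      with hD
    set E : Finset W := f'.support.filter
      (fun y => ¬ cs.length (cs.simple i * y) < cs.length y) with hE
    have hDsub : ∀ y ∈ D, BruhatLT cs y x' := by
      intro y hy
      exact hsupp' y (Finset.mem_of_mem_filter y hy)
    have hEsub : ∀ y ∈ E, BruhatLT cs y x' := by
      intro y hy
      exact hsupp' y (Finset.mem_of_mem_filter y hy)
    set μ : W → ℤ := fun y => muCoeff (f' y) with hμ
    refine ⟨ha.Cs i * c' - ∑ y ∈ D, (μ y) • cy y, ?_, ?_⟩
    · -- self-duality
      rw [map_sub, map_mul, bar_Cs, hd', map_sum]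
      congr 1
      apply Finset.sum_congr rfl
      intro y hy
      rw [map_zsmul, (hcy y (hDsub y hy)).1]
    · -- expansion
      have key : ha.Cs i * c' - ∑ y ∈ D, (μ y) • cy y - ha.H x =
          (T 1 : LaurentPolynomial ℤ) • ha.H x'
          + (∑ y ∈ E, (f' y • ha.H (cs.simple i * y) + (f' y * T 1) • ha.H y))
          + ∑ y ∈ D, (f' y • ha.H (cs.simple i * y)
              + (f' y * T (-1) - (μ y) • (1 : LaurentPolynomial ℤ)) • ha.H y
              - (μ y) • (cy y - ha.H y)) := by
        have hCsc' : ha.Cs i * c' = ha.H x + (T 1 : LaurentPolynomial ℤ) • ha.H x'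
            + ∑ y ∈ f'.support, f' y • (ha.Cs i * ha.H y) := by
          rw [hc'', mul_add, Cs_mul_up ha i x' hup, hxx']
          congr 1
          show ha.Cs i * (∑ y ∈ f'.support, f' y • ha.H y) = _
          rw [Finset.mul_sum]
          apply Finset.sum_congr rfl
          intro y _
          rw [mul_smul_comm]
        have hsplit : (∑ y ∈ f'.support, f' y • (ha.Cs i * ha.H y)) =
            (∑ y ∈ D, f' y • (ha.Cs i * ha.H y)) + ∑ y ∈ E, f' y • (ha.Cs i * ha.H y) := by
          rw [hD, hE]
          exact (Finset.sum_filter_add_sum_filter_not f'.support _ _).symm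
        have hDterm : ∀ y ∈ D, f' y • (ha.Cs i * ha.H y) =
            f' y • ha.H (cs.simple i * y) + (f' y * T (-1)) • ha.H y := by
          intro y hy
          have hcond : cs.length (cs.simple i * y) < cs.length y :=
            (Finset.mem_filter.mp hy).2
          rw [Cs_mul_down ha i y hcond, smul_add, smul_smul]
        have hEterm : ∀ y ∈ E, f' y • (ha.Cs i * ha.H y) =
            f' y • ha.H (cs.simple i * y) + (f' y * T 1) • ha.H y := by
          intro y hy
          have hcond : ¬ cs.length (cs.simple i * y) < cs.length y :=
            (Finset.mem_filter.mp hy).2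
          have hcond' : cs.length y < cs.length (cs.simple i * y) := by
            rcases cs.length_simple_mul y i with h' | h' <;> omega
          rw [Cs_mul_up ha i y hcond', smul_add, smul_smul]
        rw [hCsc', hsplit, Finset.sum_congr rfl hDterm, Finset.sum_congr rfl hEterm]
        have hpoint : ∀ y ∈ D,
            f' y • ha.H (cs.simple i * y) + (f' y * T (-1)) • ha.H y - (μ y) • cy y =
            f' y • ha.H (cs.simple i * y)
              + (f' y * T (-1) - (μ y) • (1 : LaurentPolynomial ℤ)) • ha.H y
              - (μ y) • (cy y - ha.H y) := by
          intro y hy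
          rw [sub_smul, smul_sub]
          have : ((μ y) • (1 : LaurentPolynomial ℤ)) • ha.H y = (μ y) • ha.H y := by
            rw [smul_assoc, one_smul]
          rw [this]
          abel
        rw [← Finset.sum_congr rfl hpoint, Finset.sum_sub_distrib]
        abel
      rw [key]
      apply insp_add ha
      apply insp_add ha
      · exact insp_single ha x' (T 1) isVPol_T1 hx'x
      · apply insp_sum ha
        intro y hy
        apply insp_add ha
        · exact insp_single ha _ (f' y) (hv' y) (hlift y (hEsub y hy)).2
        · exact insp_single ha _ (f' y * T 1) (isVPol_mul_T1 (hv' y)) (hlift y (hEsub y hy)).1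
      · apply insp_sum ha
        intro y hy
        apply insp_sub ha
        apply insp_add ha
        · exact insp_single ha _ (f' y) (hv' y) (hlift y (hDsub y hy)).2
        · exact insp_single ha _ _ (isVPol_shift (hv' y)) (hlift y (hDsub y hy)).1
        · apply insp_zsmul ha
          apply insp_mono ha (fun z hz => bruhat_lt_trans hz
            (bruhat_lt_trans (hDsub y hy) hx'x))
          exact (hcy y (hDsub y hy)).2

end KLAux

/-- Kazhdan–Lusztig, existence: for each `x` there is a self-dual element
`C_x ∈ H_x + ∑_{y < x} v ℤ[v] H_y`. -/
theorem stmt4 {B W : Type*} [Group W] {M : CoxeterMatrix B} (cs : CoxeterSystem M W)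
    (A : Type*) [Ring A] [Algebra (LaurentPolynomial ℤ) A] (ha : HeckeAlg cs A)
    (bar : ha.Bar) (x : W) :
    ∃ c : A, bar.d c = c ∧
      ∃ f : W →₀ LaurentPolynomial ℤ, (∀ y, IsVPol (f y)) ∧
        (∀ y ∈ f.support, BruhatLT cs y x) ∧
        c = ha.H x + f.sum fun y r => r • ha.H y := by
  obtain ⟨c, hd, f, hv, hs, heq⟩ := KLAux.kl_main ha bar (cs.length x) x rfl
  exact ⟨c, hd, f, hv, hs, by rw [← heq]; abel⟩
end

section
/- If C ∈ Σ_{x ∈ W} v Z[v] H_x is self-dual under the bar involution (d(C) = C), then C = 0. In other words, a bar-invariant element of the Hecke algebra all of whose coefficients in the standard basis lie in v Z[v] must vanish. -/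
open LaurentPolynomial

variable {B W : Type*} [Group W] {M : CoxeterMatrix B}

open scoped Classical
open HeckeAlg

/-! ### Auxiliary lemmas -/

section Aux

variable {cs : CoxeterSystem M W} {A : Type*} [Ring A] [Algebra (LaurentPolynomial ℤ) A]

local notation "am" => algebraMap (LaurentPolynomial ℤ) A

lemma aux_H_eq (ha : HeckeAlg cs A) (x : W) :
    ha.H x = (T (cs.length x : ℤ) : LaurentPolynomial ℤ) • ha.Tb x := by
  rw [HeckeAlg.H, Algebra.smul_def]

lemma aux_H_one (ha : HeckeAlg cs A) : ha.H 1 = 1 := by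
  rw [aux_H_eq, cs.length_one, ha.Tb_one]
  norm_num

lemma aux_H_mul (ha : HeckeAlg cs A) {x y : W}
    (h : cs.length (x * y) = cs.length x + cs.length y) :
    ha.H x * ha.H y = ha.H (x * y) := by
  rw [aux_H_eq, aux_H_eq, aux_H_eq, smul_mul_assoc, mul_smul_comm, ha.Tb_mul x y h,
    smul_smul, ← T_add, h]
  push_cast
  ring_nf

lemma aux_Hs_sq (ha : HeckeAlg cs A) (i : B) :
    ha.H (cs.simple i) * ha.H (cs.simple i)
      = ((T (-1) - T 1 : LaurentPolynomial ℤ)) • ha.H (cs.simple i) + 1 := by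
  have hq := ha.Tb_quadratic i
  rw [mul_sub, add_mul, add_mul, one_mul, one_mul, ← Algebra.commutes,
    ← Algebra.smul_def, Algebra.algebraMap_eq_smul_one] at hq
  -- hq : Tb s * Tb s + Tb s - (T (-2) • Tb s + T (-2) • 1)... (check)
  have hts : ha.Tb (cs.simple i) * ha.Tb (cs.simple i)
      = (T (-2) : LaurentPolynomial ℤ) • ha.Tb (cs.simple i) - ha.Tb (cs.simple i)
        + (T (-2) : LaurentPolynomial ℤ) • (1 : A) := by
    apply sub_eq_zero.mp
    calc ha.Tb (cs.simple i) * ha.Tb (cs.simple i)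
        - ((T (-2) : LaurentPolynomial ℤ) • ha.Tb (cs.simple i) - ha.Tb (cs.simple i)
          + (T (-2) : LaurentPolynomial ℤ) • (1 : A))
        = ha.Tb (cs.simple i) * ha.Tb (cs.simple i) + ha.Tb (cs.simple i)
          - ((T (-2) : LaurentPolynomial ℤ) • ha.Tb (cs.simple i)
            + (T (-2) : LaurentPolynomial ℤ) • (1 : A)) := by abel
      _ = 0 := hq
  have h1 : ha.H (cs.simple i) = (T (1 : ℤ) : LaurentPolynomial ℤ) • ha.Tb (cs.simple i) := by
    rw [aux_H_eq, cs.length_simple, Nat.cast_one]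
  rw [h1, smul_mul_assoc, mul_smul_comm, hts]
  simp only [smul_add, smul_sub, smul_smul, sub_mul, sub_smul, ← T_add]
  norm_num [T_zero, one_smul]

lemma aux_Hs_inv (ha : HeckeAlg cs A) (i : B) :
    ha.H (cs.simple i) * (ha.H (cs.simple i) + am (T 1 - T (-1))) = 1 ∧
      (ha.H (cs.simple i) + am (T 1 - T (-1))) * ha.H (cs.simple i) = 1 := by
  have hsq := aux_Hs_sq ha i
  have hzero : ((T (-1) - T 1 : LaurentPolynomial ℤ)) • ha.H (cs.simple i)
      + ((T 1 - T (-1) : LaurentPolynomial ℤ)) • ha.H (cs.simple i) = 0 := by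
    rw [← add_smul, (by ring : (T (-1) - T 1 + (T 1 - T (-1)) : LaurentPolynomial ℤ) = 0),
      zero_smul]
  have hc : am (T 1 - T (-1)) * ha.H (cs.simple i)
      = ((T 1 - T (-1) : LaurentPolynomial ℤ)) • ha.H (cs.simple i) := by
    rw [Algebra.smul_def]
  have hc' : ha.H (cs.simple i) * am (T 1 - T (-1))
      = ((T 1 - T (-1) : LaurentPolynomial ℤ)) • ha.H (cs.simple i) := by
    rw [Algebra.smul_def, Algebra.commutes]
  constructor
  · rw [mul_add, hsq, hc', add_right_comm, hzero, zero_add]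
  · rw [add_mul, hsq, hc, add_right_comm, hzero, zero_add]

lemma aux_d_Hs (ha : HeckeAlg cs A) (bar : ha.Bar) (i : B) :
    bar.d (ha.H (cs.simple i)) = ha.H (cs.simple i) + am (T 1 - T (-1)) := by
  have h1 := bar.d_H_mul' (cs.simple i)
  rw [cs.inv_simple] at h1
  have h2 := (aux_Hs_inv ha i).2
  calc bar.d (ha.H (cs.simple i))
      = ((ha.H (cs.simple i) + am (T 1 - T (-1))) * ha.H (cs.simple i))
          * bar.d (ha.H (cs.simple i)) := by rw [h2, one_mul]
    _ = (ha.H (cs.simple i) + am (T 1 - T (-1)))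
          * (ha.H (cs.simple i) * bar.d (ha.H (cs.simple i))) := by rw [mul_assoc]
    _ = ha.H (cs.simple i) + am (T 1 - T (-1)) := by rw [h1, mul_one]

/-- The span of the `H z` with `ℓ(z) < n`. -/
noncomputable def Qs (ha : HeckeAlg cs A) (n : ℕ) : Submodule (LaurentPolynomial ℤ) A :=
  Submodule.span _ (ha.H '' {z : W | cs.length z < n})

lemma Qs_mono (ha : HeckeAlg cs A) {m n : ℕ} (h : m ≤ n) : Qs ha m ≤ Qs ha n :=
  Submodule.span_mono (Set.image_mono fun z hz => lt_of_lt_of_le hz h)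

lemma H_mem_Qs (ha : HeckeAlg cs A) {z : W} {n : ℕ} (h : cs.length z < n) :
    ha.H z ∈ Qs ha n :=
  Submodule.subset_span ⟨z, h, rfl⟩

lemma aux_Hs_mul_H_mem (ha : HeckeAlg cs A) (i : B) (z : W) :
    ha.H (cs.simple i) * ha.H z ∈ Qs ha (cs.length z + 2) := by
  rcases cs.length_simple_mul z i with h | h
  · have hlen : cs.length (cs.simple i * z) = cs.length (cs.simple i) + cs.length z := by
      rw [cs.length_simple, h]; omega
    rw [aux_H_mul ha hlen]
    exact H_mem_Qs ha (by omega)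
  · -- ℓ(s z) + 1 = ℓ z
    set z' := cs.simple i * z with hz'
    have hxx : cs.simple i * z' = z := cs.simple_mul_simple_cancel_left i
    have hlen : cs.length (cs.simple i * z') = cs.length (cs.simple i) + cs.length z' := by
      rw [hxx, cs.length_simple]; omega
    have hH : ha.H z = ha.H (cs.simple i) * ha.H z' := by
      rw [aux_H_mul ha hlen, hxx]
    rw [hH, ← mul_assoc, aux_Hs_sq ha i, add_mul, smul_mul_assoc, one_mul, ← hH]
    refine Submodule.add_mem _ (Submodule.smul_mem _ _ (H_mem_Qs ha (by omega)))
      (H_mem_Qs ha ?_)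
    omega

lemma aux_Hs_mul_mem (ha : HeckeAlg cs A) (i : B) {n : ℕ} {m : A} (hm : m ∈ Qs ha n) :
    ha.H (cs.simple i) * m ∈ Qs ha (n + 1) := by
  induction hm using Submodule.span_induction with
  | mem x hx =>
    obtain ⟨z, hz, rfl⟩ := hx
    exact Qs_mono ha (by simpa using hz) (aux_Hs_mul_H_mem ha i z)
  | zero => simp
  | add x y _ _ hx hy => rw [mul_add]; exact Submodule.add_mem _ hx hy
  | smul r x _ hx => rw [mul_smul_comm]; exact Submodule.smul_mem _ _ hx

lemma aux_dH (ha : HeckeAlg cs A) (bar : ha.Bar) :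
    ∀ (n : ℕ) (x : W), cs.length x = n → bar.d (ha.H x) - ha.H x ∈ Qs ha n := by
  intro n
  induction n using Nat.strong_induction_on with
  | _ n ih =>
    intro x hn
    rcases eq_or_ne x 1 with rfl | hx1
    · rw [aux_H_one, map_one, sub_self]
      exact Submodule.zero_mem _
    · obtain ⟨i, hi⟩ := cs.exists_leftDescent_of_ne_one hx1
      rw [cs.isLeftDescent_iff] at hi
      set x' := cs.simple i * x with hx'
      have hxx : cs.simple i * x' = x := cs.simple_mul_simple_cancel_left i
      have hlen : cs.length (cs.simple i * x') = cs.length (cs.simple i) + cs.length x' := by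
        rw [hxx, cs.length_simple]; omega
      have hH : ha.H x = ha.H (cs.simple i) * ha.H x' := by
        rw [aux_H_mul ha hlen, hxx]
      have hE := ih (cs.length x') (by omega) x' rfl
      have hdx' : bar.d (ha.H x') = ha.H x' + (bar.d (ha.H x') - ha.H x') := by abel
      rw [hH, map_mul, aux_d_Hs ha bar i, hdx']
      have expand : (ha.H (cs.simple i) + am (T 1 - T (-1)))
            * (ha.H x' + (bar.d (ha.H x') - ha.H x'))
            - ha.H (cs.simple i) * ha.H x'
          = ha.H (cs.simple i) * (bar.d (ha.H x') - ha.H x')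
            + ((T 1 - T (-1) : LaurentPolynomial ℤ)) • ha.H x'
            + ((T 1 - T (-1) : LaurentPolynomial ℤ)) • (bar.d (ha.H x') - ha.H x') := by
        rw [Algebra.smul_def, Algebra.smul_def]
        noncomm_ring
      rw [expand]
      have h1 : ha.H (cs.simple i) * (bar.d (ha.H x') - ha.H x') ∈ Qs ha n := by
        have := aux_Hs_mul_mem ha i hE
        exact Qs_mono ha (by omega) this
      exact Submodule.add_mem _
        (Submodule.add_mem _ h1 (Submodule.smul_mem _ _ (H_mem_Qs ha (by omega))))
        (Submodule.smul_mem _ _ (Qs_mono ha (by omega) hE))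

lemma aux_d_am (ha : HeckeAlg cs A) (bar : ha.Bar) (p : LaurentPolynomial ℤ) :
    bar.d (am p) = am (invert p) := by
  induction p using LaurentPolynomial.induction_on' with
  | add p q hp hq => rw [map_add, map_add, map_add, map_add, hp, hq]
  | C_mul_T n a =>
    rw [map_mul, map_mul, map_mul, invert_C, invert_T, map_mul]
    congr 1
    · rw [eq_intCast (LaurentPolynomial.C (R := ℤ)) a, map_intCast, map_intCast]
    · exact bar.d_scalar n

lemma aux_d_smul (ha : HeckeAlg cs A) (bar : ha.Bar) (r : LaurentPolynomial ℤ) (m : A) :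
    bar.d (r • m) = invert r • bar.d m := by
  rw [Algebra.smul_def, map_mul, aux_d_am ha bar, Algebra.smul_def]

lemma aux_repr_sum (ha : HeckeAlg cs A) (g : W →₀ LaurentPolynomial ℤ) (x : W) :
    ha.Tb.repr (g.sum fun y r => r • ha.H y) x = g x * T (cs.length x : ℤ) := by
  classical
  rw [Finsupp.sum, map_sum, Finset.sum_apply']
  have key : ∀ y, (ha.Tb.repr (g y • ha.H y)) x
      = if y = x then g y * T (cs.length y : ℤ) else 0 := by
    intro y
    rw [aux_H_eq, smul_smul, map_smul, ha.Tb.repr_self, Finsupp.smul_apply,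
      Finsupp.single_apply]
    split <;> simp
  rw [Finset.sum_congr rfl (fun y _ => key y), Finset.sum_ite_eq' g.support x]
  split
  · rfl
  · rw [Finsupp.notMem_support_iff.mp (by assumption), zero_mul]

lemma aux_repr_Qs (ha : HeckeAlg cs A) {n : ℕ} {m : A} (hm : m ∈ Qs ha n) {x : W}
    (hx : ¬ cs.length x < n) : ha.Tb.repr m x = 0 := by
  have hsub : Qs ha n ≤ Submodule.span (LaurentPolynomial ℤ)
      (ha.Tb '' {z : W | cs.length z < n}) := by
    rw [Qs, Submodule.span_le]
    rintro _ ⟨z, hz, rfl⟩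
    rw [aux_H_eq]
    exact Submodule.smul_mem _ _ (Submodule.subset_span ⟨z, hz, rfl⟩)
  have := (ha.Tb.mem_span_image).mp (hsub hm)
  by_contra h0
  exact hx (this (Finsupp.mem_support_iff.mpr h0))

lemma aux_vpol_zero {p : LaurentPolynomial ℤ} (hp : IsVPol p) (h : invert p = p) :
    p = 0 := by
  obtain ⟨q, rfl⟩ := hp
  set p := Polynomial.toLaurent q * T 1 with hpdef
  have key : ∀ k : ℤ, k ≤ 0 → p.coeff k = 0 := by
    intro k hk
    have h1 : p.coeff k = (Polynomial.toLaurent q).coeff (k - 1) * 1 :=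
      AddMonoidAlgebra.coeff_mul_single_apply _ _ _ _
    rw [h1, mul_one]
    by_contra h0
    have hmem : (k - 1) ∈ (Polynomial.toLaurent q).coeff.support := Finsupp.mem_support_iff.mpr h0
    rw [support_coeff_toLaurent, Finset.mem_map] at hmem
    obtain ⟨m, _, hm⟩ := hmem
    have hm' : (m : ℤ) = k - 1 := hm
    omega
  apply LaurentPolynomial.ext
  intro k
  rcases le_or_gt k 0 with hk | hk
  · rw [key k hk]; rfl
  · have h2 : p.coeff k = p.coeff (-k) := by
      conv_lhs => rw [← h, invert_apply]
    rw [h2, key (-k) (by omega)]; rfl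

end Aux

/-- a bar-invariant element all of whose coefficients in the standard basis
lie in `v ℤ[v]` vanishes. -/
theorem stmt5 {B W : Type*} [Group W] {M : CoxeterMatrix B} (cs : CoxeterSystem M W)
    (A : Type*) [Ring A] [Algebra (LaurentPolynomial ℤ) A] (ha : HeckeAlg cs A)
    (bar : ha.Bar) (c : A) (f : W →₀ LaurentPolynomial ℤ)
    (hf : ∀ y, IsVPol (f y)) (hc : c = f.sum fun y r => r • ha.H y)
    (hd : bar.d c = c) :
    c = 0 := by
  classical
  by_contra hc0
  have hfne : f ≠ 0 := by
    rintro rfl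
    exact hc0 (by simpa using hc)
  obtain ⟨x, hxs, hmax⟩ := Finset.exists_max_image f.support cs.length
    (Finsupp.support_nonempty_iff.mpr hfne)
  set g : W →₀ LaurentPolynomial ℤ := f.mapRange (⇑invert) (map_zero _) with hg
  have hgs : (g.sum fun y r => r • ha.H y) = f.sum fun y r => (invert r) • ha.H y := by
    rw [hg]
    exact Finsupp.sum_mapRange_index (fun y => by rw [zero_smul])
  have h1 : ha.Tb.repr c x = f x * T (cs.length x : ℤ) := by
    rw [hc]; exact aux_repr_sum ha f x
  have herr : bar.d c - (f.sum fun y r => (invert r) • ha.H y) ∈ Qs ha (cs.length x) := by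
    rw [hc]
    rw [Finsupp.sum, Finsupp.sum, map_sum, ← Finset.sum_sub_distrib]
    apply Submodule.sum_mem
    intro y hy
    have hsplit : bar.d (f y • ha.H y) - invert (f y) • ha.H y
        = invert (f y) • (bar.d (ha.H y) - ha.H y) := by
      rw [smul_sub, aux_d_smul ha bar]
    rw [hsplit]
    exact Submodule.smul_mem _ _ (Qs_mono ha (hmax y hy) (aux_dH ha bar _ y rfl))
  have h2 : ha.Tb.repr (bar.d c) x = invert (f x) * T (cs.length x : ℤ) := by
    have hdecomp : bar.d c = (g.sum fun y r => r • ha.H y)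
        + (bar.d c - f.sum fun y r => (invert r) • ha.H y) := by
      rw [hgs]; abel
    rw [hdecomp, map_add, Finsupp.add_apply, aux_repr_sum ha g x,
      aux_repr_Qs ha herr (by omega), add_zero, hg, Finsupp.mapRange_apply]
  rw [hd, h1] at h2
  have h3 : f x = invert (f x) := by
    have hu : IsUnit (T (cs.length x : ℤ) : LaurentPolynomial ℤ) := isUnit_T _
    exact hu.mul_right_cancel h2
  have h4 : f x = 0 := aux_vpol_zero (hf x) h3.symm
  exact Finsupp.mem_support_iff.mp hxs h4
end

section
/- (Kazhdan–Lusztig, uniqueness) For each x ∈ W there exists a unique self-dual element C_x ∈ H such that C_x ∈ H_x + Σ_y v Z[v] H_y. -/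
open LaurentPolynomial

variable {B W : Type*} [Group W] {M : CoxeterMatrix B}

open scoped Classical
open HeckeAlg


namespace KLAux

open LaurentPolynomial Polynomial

abbrev R' := LaurentPolynomial ℤ

def Pol (p : R') : Prop := ∀ m : ℤ, m < 0 → p.coeff m = 0
def VPol (p : R') : Prop := ∀ m : ℤ, m ≤ 0 → p.coeff m = 0

lemma VPol.pol {p : R'} (h : VPol p) : Pol p := fun m hm => h m hm.le

lemma mul_T_coeff (p : R') (k m : ℤ) : (p * T k : R').coeff m = p.coeff (m - k) := by
  rw [show (T k : R') = AddMonoidAlgebra.single k 1 from rfl,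
    AddMonoidAlgebra.coeff_mul_single_apply, mul_one, sub_eq_add_neg]

lemma one_coeff (m : ℤ) : (1 : R').coeff m = if m = 0 then 1 else 0 := by
  rw [← T_zero, T_apply]; simp [eq_comm]

lemma pol_zero : Pol 0 := fun _ _ => rfl
lemma vpol_zero : VPol 0 := fun _ _ => rfl
lemma pol_one : Pol 1 := by
  intro m hm; rw [one_coeff, if_neg (by omega)]
lemma Pol.add {p q : R'} (hp : Pol p) (hq : Pol q) : Pol (p + q) := by
  intro m hm
  rw [AddMonoidAlgebra.coeff_add, Finsupp.add_apply, hp m hm, hq m hm, add_zero]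
lemma vpol_T_one : VPol (T 1 : R') := by
  intro m hm
  rw [T_apply, if_neg (by omega)]
lemma VPol.sub {p q : R'} (hp : VPol p) (hq : VPol q) : VPol (p - q) := by
  intro m hm
  rw [AddMonoidAlgebra.coeff_sub, Finsupp.sub_apply, hp m hm, hq m hm, sub_zero]
lemma Pol.mul_T_one {p : R'} (hp : Pol p) : VPol (p * T 1) := by
  intro m hm; rw [mul_T_coeff]; exact hp _ (by omega)
lemma VPol.mul_T_neg_one {p : R'} (hp : VPol p) : Pol (p * T (-1)) := by
  intro m hm; rw [mul_T_coeff]; exact hp _ (by omega)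
lemma VPol.eq_zero_of_invert {p : R'} (hp : VPol p) (hinv : invert p = p) : p = 0 := by
  ext m
  rcases le_or_gt m 0 with hm | hm
  · exact hp m hm
  · have h1 : p.coeff (-m) = p.coeff m := by
      conv_rhs => rw [← hinv]
      rw [invert_apply]
    rw [AddMonoidAlgebra.coeff_zero, Finsupp.coe_zero, Pi.zero_apply, ← h1]
    exact hp (-m) (by omega)

lemma toLaurent_coeff_s6 (f : Polynomial ℤ) (m : ℤ) :
    (toLaurent f : R').coeff m = if 0 ≤ m then f.coeff m.toNat else 0 := by
  rw [coeff_toLaurent]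
  rcases le_or_gt 0 m with h | h
  · lift m to ℕ using h
    rw [show ((m : ℕ) : ℤ) = Nat.castEmbedding m from rfl,
      Finsupp.mapDomain_apply Nat.castEmbedding.injective]
    simp [Polynomial.coeff]
  · rw [Finsupp.mapDomain_notin_range]
    · simp [not_le.mpr h]
    · rintro ⟨n, rfl⟩
      simp at h
      omega

lemma trunc_coeff (g : R') (n : ℕ) : (trunc g).coeff n = g.coeff (n : ℤ) := rfl

lemma isVPol_iff (p : R') : IsVPol p ↔ VPol p := by
  constructor
  · rintro ⟨q, rfl⟩ m hm
    rw [mul_T_coeff, toLaurent_coeff_s6, if_neg (by omega)]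
  · intro h
    refine ⟨trunc (p * T (-1)), ?_⟩
    have key : toLaurent (trunc (p * T (-1))) = p * T (-1) := by
      ext m
      rw [toLaurent_coeff_s6]
      rcases le_or_gt 0 m with hm | hm
      · rw [if_pos hm, trunc_coeff, mul_T_coeff, mul_T_coeff]
        congr 1
        omega
      · rw [if_neg (not_le.mpr hm), mul_T_coeff]
        exact (h _ (by omega)).symm
    rw [key, mul_T_assoc]
    norm_num

end KLAux

namespace HeckeAlg

open LaurentPolynomial KLAux CoxeterSystem

variable {B W : Type*} [Group W] {M : CoxeterMatrix B} {cs : CoxeterSystem M W}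
  {A : Type*} [Ring A] [Algebra (LaurentPolynomial ℤ) A]

local notation "ℛ" => LaurentPolynomial ℤ
local notation "ℓ" => cs.length
local notation "σ" => cs.simple

lemma am_mul (p : ℛ) (a : A) : algebraMap ℛ A p * a = p • a := (Algebra.smul_def p a).symm

lemma H_eq (ha : HeckeAlg cs A) (x : W) :
    ha.H x = (T (cs.length x : ℤ) : ℛ) • ha.Tb x := (Algebra.smul_def _ _).symm

/-- The standard basis `H` as a `Basis`. -/
noncomputable def Hb (ha : HeckeAlg cs A) : Module.Basis W ℛ A :=
  ha.Tb.unitsSMul fun x => (isUnit_T (cs.length x : ℤ)).unit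

@[simp] lemma Hb_apply (ha : HeckeAlg cs A) (x : W) : ha.Hb x = ha.H x := by
  rw [Hb, Module.Basis.unitsSMul_apply, H_eq, Units.smul_def, IsUnit.unit_spec]

lemma H_one (ha : HeckeAlg cs A) : ha.H 1 = 1 := by
  rw [H_eq, cs.length_one]
  norm_num [ha.Tb_one]

lemma H_mul (ha : HeckeAlg cs A) {x y : W} (h : cs.length (x * y) = cs.length x + cs.length y) :
    ha.H x * ha.H y = ha.H (x * y) := by
  rw [H_eq, H_eq, H_eq, smul_mul_assoc, mul_smul_comm, smul_smul, ← T_add, ha.Tb_mul x y h]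
  congr 1
  push_cast [h]
  ring

lemma Tb_sq (ha : HeckeAlg cs A) (i : B) :
    ha.Tb (σ i) * ha.Tb (σ i) =
      (T (-2) : ℛ) • ha.Tb (σ i) + (T (-2) : ℛ) • (1 : A) - ha.Tb (σ i) := by
  have h := ha.Tb_quadratic i
  rw [mul_sub, add_mul, add_mul, one_mul, one_mul, sub_eq_zero] at h
  have h2 : ha.Tb (σ i) * algebraMap ℛ A (T (-2)) = (T (-2) : ℛ) • ha.Tb (σ i) := by
    rw [← Algebra.commutes, am_mul]
  have h3 : algebraMap ℛ A (T (-2)) = (T (-2) : ℛ) • (1 : A) :=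
    Algebra.algebraMap_eq_smul_one _
  rw [h2, h3] at h
  rw [eq_sub_iff_add_eq, h]

lemma H_simple_sq (ha : HeckeAlg cs A) (i : B) :
    ha.H (σ i) * ha.H (σ i) = 1 + ((T (-1) - T 1 : ℛ)) • ha.H (σ i) := by
  have hl : cs.length (σ i) = 1 := cs.length_simple i
  rw [H_eq, hl, smul_mul_assoc, mul_smul_comm, smul_smul, ← T_add, Tb_sq]
  simp only [smul_sub, smul_add, smul_smul, sub_mul, ← T_add]
  norm_num
  rw [sub_smul, one_smul]
  abel

end HeckeAlg

namespace HeckeAlg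

open LaurentPolynomial KLAux CoxeterSystem

variable {B W : Type*} [Group W] {M : CoxeterMatrix B} {cs : CoxeterSystem M W}
  {A : Type*} [Ring A] [Algebra (LaurentPolynomial ℤ) A]

local notation "ℛ" => LaurentPolynomial ℤ

lemma Cs_def (ha : HeckeAlg cs A) (i : B) :
    ha.Cs i = ha.H (cs.simple i) + algebraMap ℛ A (T 1) := rfl

lemma d_am (ha : HeckeAlg cs A) (bar : ha.Bar) (p : ℛ) :
    bar.d (algebraMap ℛ A p) = algebraMap ℛ A (invert p) := by
  induction p using LaurentPolynomial.induction_on' with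
  | add p q hp hq => simp [map_add, hp, hq]
  | C_mul_T n a =>
      rw [eq_intCast (C : ℤ →+* ℛ) a]
      simp only [map_mul, map_intCast, invert_T, bar.d_scalar]

lemma d_smul (ha : HeckeAlg cs A) (bar : ha.Bar) (p : ℛ) (a : A) :
    bar.d (p • a) = invert p • bar.d a := by
  rw [Algebra.smul_def, map_mul, d_am, Algebra.smul_def]

lemma d_H_simple (ha : HeckeAlg cs A) (bar : ha.Bar) (i : B) :
    bar.d (ha.H (cs.simple i)) = ha.H (cs.simple i) + ((T 1 - T (-1) : ℛ)) • (1 : A) := by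
  have key : ha.H (cs.simple i) * (ha.H (cs.simple i) + ((T 1 - T (-1) : ℛ)) • (1 : A)) = 1 := by
    rw [mul_add, H_simple_sq, mul_smul_comm, mul_one]
    have h : ((T (-1) - T 1 : ℛ)) = -(T 1 - T (-1)) := by ring
    rw [h, neg_smul]
    abel
  have h1 := bar.d_H_mul (cs.simple i)
  rw [cs.inv_simple] at h1
  calc bar.d (ha.H (cs.simple i))
      = bar.d (ha.H (cs.simple i)) * (ha.H (cs.simple i) *
        (ha.H (cs.simple i) + ((T 1 - T (-1) : ℛ)) • (1 : A))) := by rw [key, mul_one]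
    _ = (bar.d (ha.H (cs.simple i)) * ha.H (cs.simple i)) *
        (ha.H (cs.simple i) + ((T 1 - T (-1) : ℛ)) • (1 : A)) := by rw [mul_assoc]
    _ = ha.H (cs.simple i) + ((T 1 - T (-1) : ℛ)) • (1 : A) := by rw [h1, one_mul]

lemma d_Cs (ha : HeckeAlg cs A) (bar : ha.Bar) (i : B) : bar.d (ha.Cs i) = ha.Cs i := by
  rw [Cs_def, map_add, d_H_simple, bar.d_scalar]
  rw [Algebra.algebraMap_eq_smul_one (R := ℛ) (T (-1)), Algebra.algebraMap_eq_smul_one (R := ℛ) (T 1),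
    sub_smul]
  abel

/-- Case analysis for `H_s * H_z`. -/
lemma H_simple_mul (ha : HeckeAlg cs A) (i : B) (z : W) :
    (cs.length (cs.simple i * z) = cs.length z + 1 ∧
      ha.H (cs.simple i) * ha.H z = ha.H (cs.simple i * z)) ∨
    (cs.length (cs.simple i * z) + 1 = cs.length z ∧
      ha.H (cs.simple i) * ha.H z = ha.H (cs.simple i * z) +
        ((T (-1) - T 1 : ℛ)) • ha.H z) := by
  rcases cs.length_simple_mul z i with h | h
  · left
    refine ⟨h, ha.H_mul ?_⟩
    rw [h, cs.length_simple]
    ring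
  · right
    refine ⟨h, ?_⟩
    set z' := cs.simple i * z with hz'
    have hzz : z = cs.simple i * z' := by rw [hz', cs.simple_mul_simple_cancel_left]
    have hmul : ha.H (cs.simple i) * ha.H z' = ha.H z := by
      rw [ha.H_mul ?h1]
      · rw [← hzz]
      case h1 =>
        rw [← hzz, cs.length_simple]
        omega
    calc ha.H (cs.simple i) * ha.H z
        = ha.H (cs.simple i) * (ha.H (cs.simple i) * ha.H z') := by rw [hmul]
      _ = (ha.H (cs.simple i) * ha.H (cs.simple i)) * ha.H z' := by rw [mul_assoc]
      _ = ha.H z' + ((T (-1) - T 1 : ℛ)) • (ha.H (cs.simple i) * ha.H z') := by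
          rw [H_simple_sq, add_mul, one_mul, smul_mul_assoc]
      _ = ha.H (cs.simple i * z) + ((T (-1) - T 1 : ℛ)) • ha.H z := by rw [hmul, hz']

/-- `C_s * H_z = H_{sz} + q • H_z` with `q ∈ {v, v⁻¹}`. -/
lemma Cs_mul_H (ha : HeckeAlg cs A) (i : B) (z : W) :
    ∃ q : ℛ, (q = T 1 ∨ q = T (-1)) ∧
      (cs.length (cs.simple i * z) = cs.length z + 1 → q = T 1) ∧
      ha.Cs i * ha.H z = ha.H (cs.simple i * z) + q • ha.H z := by
  rcases ha.H_simple_mul i z with ⟨hl, he⟩ | ⟨hl, he⟩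
  · exact ⟨T 1, Or.inl rfl, fun _ => rfl, by rw [Cs_def, add_mul, he, am_mul]⟩
  · refine ⟨T (-1), Or.inr rfl, fun h => by omega, ?_⟩
    rw [Cs_def, add_mul, he, am_mul, sub_smul]
    have : (T (-1) : ℛ) = T (-1) - T 1 + T 1 := by ring
    rw [this, add_smul, sub_smul]
    abel

end HeckeAlg

namespace HeckeAlg

open LaurentPolynomial KLAux CoxeterSystem

variable {B W : Type*} [Group W] {M : CoxeterMatrix B} {cs : CoxeterSystem M W}
  {A : Type*} [Ring A] [Algebra (LaurentPolynomial ℤ) A]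

local notation "ℛ" => LaurentPolynomial ℤ

/-- The span of `H_y` for `ℓ(y) < n`. -/
noncomputable def LS (ha : HeckeAlg cs A) (n : ℕ) : Submodule ℛ A :=
  Submodule.span ℛ (ha.Hb '' {y | cs.length y < n})

lemma H_mem_LS (ha : HeckeAlg cs A) {y : W} {n : ℕ} (h : cs.length y < n) :
    ha.H y ∈ ha.LS n :=
  Submodule.subset_span ⟨y, h, ha.Hb_apply y⟩

lemma LS_mono (ha : HeckeAlg cs A) {m n : ℕ} (h : m ≤ n) : ha.LS m ≤ ha.LS n :=
  Submodule.span_mono (Set.image_mono fun _ hy => lt_of_lt_of_le hy h)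

lemma repr_eq_zero_of_mem_LS (ha : HeckeAlg cs A) {a : A} {n : ℕ}
    (h : a ∈ ha.LS n) {y : W} (hy : n ≤ cs.length y) : ha.Hb.repr a y = 0 := by
  rw [LS, ha.Hb.mem_span_image] at h
  by_contra hne
  exact absurd (h (Finsupp.mem_support_iff.mpr hne)) (by simp; omega)

lemma H_simple_mul_LS (ha : HeckeAlg cs A) (i : B) {a : A} {n : ℕ} (h : a ∈ ha.LS n) :
    ha.H (cs.simple i) * a ∈ ha.LS (n + 1) := by
  induction h using Submodule.span_induction with
  | mem b hb =>
      obtain ⟨y, hy, rfl⟩ := hb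
      simp only [Set.mem_setOf_eq] at hy
      rw [Hb_apply]
      rcases ha.H_simple_mul i y with ⟨hl, he⟩ | ⟨hl, he⟩
      · rw [he]
        exact ha.H_mem_LS (by omega)
      · rw [he]
        exact Submodule.add_mem _ (ha.H_mem_LS (by omega))
          (Submodule.smul_mem _ _ (ha.H_mem_LS (by omega)))
  | zero => rw [mul_zero]; exact Submodule.zero_mem _
  | add b c _ _ hb hc => rw [mul_add]; exact Submodule.add_mem _ hb hc
  | smul r b _ hb => rw [mul_smul_comm]; exact Submodule.smul_mem _ _ hb

/-- The bar involution fixes `H_x` modulo lower terms. -/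
lemma d_H_sub_mem (ha : HeckeAlg cs A) (bar : ha.Bar) :
    ∀ (n : ℕ) (x : W), cs.length x = n → bar.d (ha.H x) - ha.H x ∈ ha.LS n := by
  intro n
  induction n with
  | zero =>
      intro x hx
      rw [cs.length_eq_zero_iff] at hx
      subst hx
      rw [ha.H_one, map_one, sub_self]
      exact Submodule.zero_mem _
  | succ n ih =>
      intro x hx
      have hx1 : x ≠ 1 := fun h => by rw [h, cs.length_one] at hx; omega
      obtain ⟨i, hi⟩ := cs.exists_leftDescent_of_ne_one hx1
      rw [cs.isLeftDescent_iff] at hi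
      set y := cs.simple i * x with hy
      have hyl : cs.length y = n := by omega
      have hxy : x = cs.simple i * y := by rw [hy, cs.simple_mul_simple_cancel_left]
      have hH : ha.H (cs.simple i) * ha.H y = ha.H x := by
        rw [ha.H_mul ?hlen, ← hxy]
        case hlen => rw [← hxy, cs.length_simple]; omega
      set w := bar.d (ha.H y) - ha.H y with hw
      have hwm : w ∈ ha.LS n := ih y hyl
      have hdy : bar.d (ha.H y) = ha.H y + w := by rw [hw]; abel
      have key : bar.d (ha.H x) - ha.H x =
          ha.H (cs.simple i) * w + ((T 1 - T (-1) : ℛ)) • ha.H y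
            + ((T 1 - T (-1) : ℛ)) • w := by
        rw [← hH, map_mul, d_H_simple, hdy]
        rw [mul_add, add_mul, add_mul, smul_mul_assoc, smul_mul_assoc, one_mul, one_mul]
        abel
      rw [key]
      refine Submodule.add_mem _ (Submodule.add_mem _ ?_ ?_) ?_
      · exact ha.H_simple_mul_LS i hwm
      · exact Submodule.smul_mem _ _ (ha.H_mem_LS (by omega))
      · exact Submodule.smul_mem _ _ (ha.LS_mono (Nat.le_succ n) hwm)

end HeckeAlg

namespace HeckeAlg

open LaurentPolynomial KLAux CoxeterSystem

variable {B W : Type*} [Group W] {M : CoxeterMatrix B} {cs : CoxeterSystem M W}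
  {A : Type*} [Ring A] [Algebra (LaurentPolynomial ℤ) A]

local notation "ℛ" => LaurentPolynomial ℤ

lemma expand (ha : HeckeAlg cs A) (a : A) :
    a = (ha.Hb.repr a).sum fun z c => c • ha.H z := by
  conv_lhs => rw [← ha.Hb.linearCombination_repr a]
  rw [Finsupp.linearCombination_apply]
  exact Finsupp.sum_congr fun z _ => by rw [Hb_apply]

lemma repr_sumH (ha : HeckeAlg cs A) (f : W →₀ ℛ) :
    ha.Hb.repr (f.sum fun y r => r • ha.H y) = f := by
  have h : (f.sum fun y r => r • ha.H y) = Finsupp.linearCombination ℛ ha.Hb f := by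
    rw [Finsupp.linearCombination_apply]
    exact Finsupp.sum_congr fun z _ => by rw [Hb_apply]
  rw [h, ha.Hb.repr_linearCombination]

lemma repr_H (ha : HeckeAlg cs A) (z : W) :
    ha.Hb.repr (ha.H z) = Finsupp.single z 1 := by
  rw [← ha.Hb_apply z, ha.Hb.repr_self]

lemma repr_mul (ha : HeckeAlg cs A) (u b : A) :
    ha.Hb.repr (u * b) = (ha.Hb.repr b).sum fun z c => c • ha.Hb.repr (u * ha.H z) := by
  conv_lhs => rw [ha.expand b, Finsupp.mul_sum]
  rw [map_finsuppSum]
  exact Finsupp.sum_congr fun z _ => by rw [mul_smul_comm, map_smul]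

/-- A self-dual element all of whose coefficients lie in `vℤ[v]` is zero. -/
lemma selfdual_eq_zero (ha : HeckeAlg cs A) (bar : ha.Bar) {a : A} (hd : bar.d a = a)
    (hv : ∀ y, VPol (ha.Hb.repr a y)) : a = 0 := by
  classical
  by_contra hne
  have hrne : ha.Hb.repr a ≠ 0 := fun h0 => hne (by
    have h2 := congrArg ha.Hb.repr.symm h0
    simpa using h2)
  obtain ⟨y, hy, hmax⟩ := Finset.exists_max_image (ha.Hb.repr a).support
    (fun z => cs.length z) (Finsupp.support_nonempty_iff.mpr hrne)
  have h1 : bar.d a = (ha.Hb.repr a).sum fun z c => invert c • bar.d (ha.H z) := by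
    conv_lhs => rw [ha.expand a]
    rw [map_finsuppSum]
    exact Finsupp.sum_congr fun z _ => ha.d_smul bar _ _
  have h2 : ha.Hb.repr (bar.d a) =
      (ha.Hb.repr a).sum fun z c => invert c • ha.Hb.repr (bar.d (ha.H z)) := by
    rw [h1, map_finsuppSum]
    exact Finsupp.sum_congr fun z _ => map_smul _ _ _
  have h4 : ∀ z ∈ (ha.Hb.repr a).support,
      ha.Hb.repr (bar.d (ha.H z)) y = if z = y then 1 else 0 := by
    intro z hz
    have hzle : cs.length z ≤ cs.length y := hmax z hz
    have hmem := ha.d_H_sub_mem bar (cs.length z) z rfl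
    have hrw : bar.d (ha.H z) = ha.H z + (bar.d (ha.H z) - ha.H z) := by abel
    rw [hrw, map_add, Finsupp.add_apply, ha.repr_H,
      ha.repr_eq_zero_of_mem_LS hmem hzle, add_zero, Finsupp.single_apply]
  have h3 : ha.Hb.repr (bar.d a) y = invert (ha.Hb.repr a y) := by
    rw [h2, Finsupp.sum_apply, Finsupp.sum]
    rw [Finset.sum_eq_single_of_mem y hy (fun z hz hzy => by
      rw [Finsupp.smul_apply, h4 z hz, if_neg hzy, smul_zero])]
    rw [Finsupp.smul_apply, h4 y hy, if_pos rfl, smul_eq_mul, mul_one]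
  rw [hd] at h3
  have h0 : ha.Hb.repr a y = 0 := (hv y).eq_zero_of_invert h3.symm
  exact absurd h0 (Finsupp.mem_support_iff.mp hy)

end HeckeAlg

namespace HeckeAlg

open LaurentPolynomial KLAux CoxeterSystem

variable {B W : Type*} [Group W] {M : CoxeterMatrix B} {cs : CoxeterSystem M W}
  {A : Type*} [Ring A] [Algebra (LaurentPolynomial ℤ) A]

local notation "ℛ" => LaurentPolynomial ℤ

/-- Strong form of the KL property. -/
def KLS (ha : HeckeAlg cs A) (bar : ha.Bar) (x : W) (c : A) : Prop :=
  bar.d c = c ∧ ha.Hb.repr c x = 1 ∧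
    ∀ z, z ≠ x → VPol (ha.Hb.repr c z) ∧ (ha.Hb.repr c z ≠ 0 → cs.length z < cs.length x)

lemma pol_finset_sum (s : Finset W) (g : W → ℛ) (hg : ∀ z ∈ s, Pol (g z)) :
    Pol (∑ z ∈ s, g z) := by
  intro m hm
  rw [AddMonoidAlgebra.coeff_sum, Finset.sum_apply']
  exact Finset.sum_eq_zero fun z hz => hg z hz m hm

/-- The self-dual element `C_s · C_y` has polynomial coefficients below `x = s y`. -/
lemma exists_raw (ha : HeckeAlg cs A) (bar : ha.Bar) {x y : W} {i : B}
    (hxy : x = cs.simple i * y)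
    (hlen : cs.length x = cs.length y + 1) {cy : A} (hcy : ha.KLS bar y cy) :
    ∃ a : A, bar.d a = a ∧ ha.Hb.repr a x = 1 ∧
      ∀ z, z ≠ x → Pol (ha.Hb.repr a z) ∧
        (ha.Hb.repr a z ≠ 0 → cs.length z < cs.length x) := by
  classical
  choose q hq1 hq2 hq3 using fun z => ha.Cs_mul_H i z
  set F := ha.Hb.repr cy with hF
  refine ⟨ha.Cs i * cy, by rw [map_mul, ha.d_Cs bar i, hcy.1], ?_, ?_⟩
  all_goals {
    have hrep : ∀ z z', ha.Hb.repr (ha.Cs i * ha.H z) z' =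
        (if cs.simple i * z = z' then (1:ℛ) else 0) +
          q z * (if z = z' then (1:ℛ) else 0) := by
      intro z z'
      rw [hq3 z, map_add, ha.repr_H, map_smul, ha.repr_H, Finsupp.add_apply,
        Finsupp.smul_apply, Finsupp.single_apply, Finsupp.single_apply, smul_eq_mul]
    have hcoeff : ∀ z', ha.Hb.repr (ha.Cs i * cy) z' =
        ∑ z ∈ F.support, F z * ((if cs.simple i * z = z' then (1:ℛ) else 0) +
          q z * (if z = z' then (1:ℛ) else 0)) := by
      intro z'
      rw [ha.repr_mul, Finsupp.sum_apply, Finsupp.sum]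
      exact Finset.sum_congr rfl fun z _ => by
        rw [Finsupp.smul_apply, hrep, smul_eq_mul]
    have hymem : y ∈ F.support := Finsupp.mem_support_iff.mpr (by
      rw [hF, hcy.2.1]; exact one_ne_zero)
    have hsupp : ∀ z ∈ F.support, z ≠ y → cs.length z < cs.length y := by
      intro z hz hzy
      exact (hcy.2.2 z hzy).2 (Finsupp.mem_support_iff.mp (hF ▸ hz))
    have hq2y : q y = T 1 := hq2 y (by rw [← hxy]; omega)
    first
    | -- goal 1 : coefficient at x is 1
      ( rw [hcoeff x]
        rw [Finset.sum_eq_single_of_mem y hymem ?side]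
        · have h1 : cs.simple i * y = x := hxy.symm
          have h2 : y ≠ x := fun h => by rw [h] at hlen; omega
          rw [hF, hcy.2.1, if_pos h1, if_neg h2, mul_zero, add_zero, one_mul]
        case side =>
          intro z hz hzy
          have hzlt : cs.length z < cs.length y := hsupp z hz hzy
          have hzx : z ≠ x := fun h => by rw [h] at hzlt; omega
          have hsz : cs.simple i * z ≠ x := by
            intro h
            rw [hxy] at h
            exact hzy (mul_left_cancel h)
          rw [if_neg hsz, if_neg hzx, mul_zero, add_zero, mul_zero] )
    | -- goal 2 : other coefficients
      ( intro z' hz'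
        constructor
        · rw [hcoeff z']
          refine pol_finset_sum _ _ fun z hz => ?_
          have hterm : Pol (F z) ∧ Pol (F z * q z) := by
            by_cases hzy : z = y
            · subst hzy
              rw [hF, hcy.2.1, hq2y, one_mul]
              exact ⟨pol_one, vpol_T_one.pol⟩
            · have hv : VPol (F z) := (hcy.2.2 z hzy).1
              refine ⟨hv.pol, ?_⟩
              rcases hq1 z with h | h
              · rw [h]; exact (hv.pol.mul_T_one).pol
              · rw [h]; exact hv.mul_T_neg_one
          split_ifs with h1 h2 h3
          · rw [mul_one, mul_add, mul_one]
            exact hterm.1.add hterm.2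
          · rw [mul_zero, add_zero, mul_one]
            exact hterm.1
          · rw [mul_one, zero_add]
            exact hterm.2
          · simpa using pol_zero
        · intro hne
          by_contra hge
          apply hne
          rw [hcoeff z']
          refine Finset.sum_eq_zero fun z hz => ?_
          have hlz : cs.length z ≤ cs.length y := by
            by_cases hzy : z = y
            · rw [hzy]
            · exact (hsupp z hz hzy).le
          have hszl : cs.length (cs.simple i * z) ≤ cs.length z + 1 := by
            rcases cs.length_simple_mul z i with h | h <;> omega
          have h1 : cs.simple i * z ≠ z' := by
            intro h
            by_cases hzy : z = y
            · rw [hzy] at h; rw [← hxy] at h; exact hz' h.symm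
            · have := hsupp z hz hzy
              rw [h] at hszl
              omega
          have h2 : z ≠ z' := by
            intro h
            rw [h] at hlz
            omega
          rw [if_neg h1, if_neg h2, mul_zero, add_zero, mul_zero] ) }

end HeckeAlg

namespace HeckeAlg

open LaurentPolynomial KLAux CoxeterSystem

variable {B W : Type*} [Group W] {M : CoxeterMatrix B} {cs : CoxeterSystem M W}
  {A : Type*} [Ring A] [Algebra (LaurentPolynomial ℤ) A]

local notation "ℛ" => LaurentPolynomial ℤ

/-- Subtracting integer multiples of lower KL elements. -/
lemma subtract (ha : HeckeAlg cs A) (bar : ha.Bar) {x : W} {n : ℕ} (hx : cs.length x = n)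
    (g : W → A) (hg : ∀ z, cs.length z < n → ha.KLS bar z (g z))
    {a : A} (hda : bar.d a = a) (h1 : ha.Hb.repr a x = 1)
    (h2 : ∀ z, z ≠ x → Pol (ha.Hb.repr a z) ∧
      (ha.Hb.repr a z ≠ 0 → cs.length z < cs.length x)) :
    ∃ c, ha.KLS bar x c := by
  classical
  set S := (ha.Hb.repr a).support.erase x with hS
  set c := a - ∑ z ∈ S, ((ha.Hb.repr a z).coeff 0 : ℤ) • g z with hc
  have hSmem : ∀ z ∈ S, z ≠ x ∧ cs.length z < n := by
    intro z hz
    have h5 := Finset.mem_erase.mp hz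
    exact ⟨h5.1, hx ▸ (h2 z h5.1).2 (Finsupp.mem_support_iff.mp h5.2)⟩
  have hrepr : ∀ z', ha.Hb.repr c z' = ha.Hb.repr a z' -
      ∑ z ∈ S, ((ha.Hb.repr a z).coeff 0 : ℤ) • (ha.Hb.repr (g z) z') := by
    intro z'
    rw [hc, map_sub, map_sum, Finsupp.sub_apply]
    congr 1
    rw [Finset.sum_apply']
    exact Finset.sum_congr rfl fun z hz => by rw [map_zsmul, Finsupp.smul_apply]
  have hgx : ∀ z ∈ S, ha.Hb.repr (g z) x = 0 := by
    intro z hz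
    obtain ⟨hzx, hzn⟩ := hSmem z hz
    by_contra hne
    have := ((hg z hzn).2.2 x (Ne.symm hzx)).2 hne
    omega
  refine ⟨c, ?_, ?_, ?_⟩
  · rw [hc, map_sub, hda, map_sum]
    congr 1
    refine Finset.sum_congr rfl fun z hz => ?_
    rw [map_zsmul, (hg z (hSmem z hz).2).1]
  · rw [hrepr x, h1, Finset.sum_eq_zero fun z hz => by rw [hgx z hz, smul_zero], sub_zero]
  · intro z' hz'
    constructor
    · -- VPol
      intro m hm
      have heval : (ha.Hb.repr c z').coeff m = (ha.Hb.repr a z').coeff m -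
          ∑ z ∈ S, ((ha.Hb.repr a z).coeff 0) * ((ha.Hb.repr (g z) z').coeff m) := by
        rw [hrepr z', AddMonoidAlgebra.coeff_sub, Finsupp.sub_apply]
        congr 1
        rw [AddMonoidAlgebra.coeff_sum, Finset.sum_apply']
        exact Finset.sum_congr rfl fun z hz => by
          rw [AddMonoidAlgebra.coeff_smul_apply, smul_eq_mul]
      rw [heval]
      have hother : ∀ z ∈ S, z ≠ z' →
          ((ha.Hb.repr a z).coeff 0) * ((ha.Hb.repr (g z) z').coeff m) = 0 := by
        intro z hz hzz'
        have hv := ((hg z (hSmem z hz).2).2.2 z' (Ne.symm hzz')).1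
        rw [hv m hm, mul_zero]
      by_cases hz'S : z' ∈ S
      · rw [Finset.sum_eq_single_of_mem z' hz'S hother]
        rw [(hg z' (hSmem z' hz'S).2).2.1, one_coeff]
        rcases lt_or_eq_of_le hm with hlt | heq
        · rw [if_neg (by omega), mul_zero, sub_zero]
          exact (h2 z' hz').1 m hlt
        · rw [heq, if_pos rfl, mul_one, sub_self]
      · have hz0 : ha.Hb.repr a z' = 0 := by
          by_contra hne
          exact hz'S (Finset.mem_erase.mpr ⟨hz', Finsupp.mem_support_iff.mpr hne⟩)
        rw [hz0, AddMonoidAlgebra.coeff_zero, Finsupp.coe_zero, Pi.zero_apply,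
          Finset.sum_eq_zero fun z hz => hother z hz (fun h => hz'S (h ▸ hz)), sub_zero]
    · -- length bound
      intro hne
      by_contra hge
      apply hne
      rw [hrepr z']
      have ha0 : ha.Hb.repr a z' = 0 := by
        by_contra h
        exact hge ((h2 z' hz').2 h)
      rw [ha0, Finset.sum_eq_zero, sub_zero]
      intro z hz
      have hzn := (hSmem z hz).2
      have : ha.Hb.repr (g z) z' = 0 := by
        by_cases hzz' : z' = z
        · subst hzz'
          exact absurd (hx ▸ hzn) hge
        · by_contra h
          have := ((hg z hzn).2.2 z' hzz').2 h
          rw [hx] at hge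
          omega
      rw [this, smul_zero]

/-- Existence of strong KL elements, by induction on length. -/
lemma exists_KLS (ha : HeckeAlg cs A) (bar : ha.Bar) :
    ∀ (n : ℕ) (x : W), cs.length x < n → ∃ c, ha.KLS bar x c := by
  intro n
  induction n with
  | zero => intro x hx; omega
  | succ n ih =>
      intro x hx
      by_cases hxn : cs.length x < n
      · exact ih x hxn
      · have hxn' : cs.length x = n := by omega
        by_cases hx1 : x = 1
        · subst hx1
          refine ⟨1, map_one _, ?_, ?_⟩
          · rw [← ha.H_one, ha.repr_H, Finsupp.single_apply, if_pos rfl]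
          · intro z hz
            rw [← ha.H_one, ha.repr_H, Finsupp.single_apply, if_neg (fun h => hz h.symm)]
            exact ⟨vpol_zero, fun h => absurd rfl h⟩
        · obtain ⟨i, hi⟩ := cs.exists_leftDescent_of_ne_one hx1
          rw [cs.isLeftDescent_iff] at hi
          set y := cs.simple i * x with hy
          have hxy : x = cs.simple i * y := by rw [hy, cs.simple_mul_simple_cancel_left]
          have hylen : cs.length x = cs.length y + 1 := by omega
          obtain ⟨cy, hcy⟩ := ih y (by omega)
          obtain ⟨a, hda, h1, h2⟩ := ha.exists_raw bar hxy hylen hcy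
          have hg : ∀ z : W, ∃ c, cs.length z < n → ha.KLS bar z c := by
            intro z
            by_cases hzn : cs.length z < n
            · exact (ih z hzn).imp fun c hc _ => hc
            · exact ⟨0, fun h => absurd h hzn⟩
          choose g hgspec using hg
          exact ha.subtract bar hxn' g hgspec hda h1 h2

end HeckeAlg

/-- Kazhdan–Lusztig: for each `x` there is a unique self-dual element
`C_x ∈ H_x + ∑_y v ℤ[v] H_y`. -/
theorem stmt6 {B W : Type*} [Group W] {M : CoxeterMatrix B} (cs : CoxeterSystem M W)
    (A : Type*) [Ring A] [Algebra (LaurentPolynomial ℤ) A] (ha : HeckeAlg cs A)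
    (bar : ha.Bar) (x : W) :
    ∃! c : A, ha.IsKL bar x c := by
    classical
  obtain ⟨c, hdc, hcx, hcrest⟩ := ha.exists_KLS bar (cs.length x + 1) x (by omega)
  refine ⟨c, ⟨hdc, (ha.Hb.repr c).erase x, ?_, ?_⟩, ?_⟩
  · intro y
    by_cases hyx : y = x
    · subst hyx
      rw [Finsupp.erase_same]
      exact KLAux.isVPol_zero
    · rw [Finsupp.erase_ne hyx]
      exact (KLAux.isVPol_iff _).mpr (hcrest y hyx).1
  · apply ha.Hb.repr.injective
    rw [map_add, ha.repr_H, ha.repr_sumH]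
    conv_lhs => rw [← Finsupp.single_add_erase x (ha.Hb.repr c)]
    rw [hcx]
  · rintro c' ⟨hdc', f', hf', hce⟩
    have hreprc' : ha.Hb.repr c' = Finsupp.single x 1 + f' := by
      rw [hce, map_add, ha.repr_H, ha.repr_sumH]
    have key : c' - c = 0 := by
      refine ha.selfdual_eq_zero bar (by rw [map_sub, hdc, hdc']) ?_
      intro yy
      have heq : ha.Hb.repr (c' - c) yy =
          (Finsupp.single x 1 yy + f' yy) - ha.Hb.repr c yy := by
        rw [map_sub, Finsupp.sub_apply, hreprc', Finsupp.add_apply]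
      rw [heq, Finsupp.single_apply]
      by_cases hyx : yy = x
      · subst hyx
        rw [if_pos rfl, hcx, add_sub_cancel_left]
        exact (KLAux.isVPol_iff _).mp (hf' yy)
      · rw [if_neg (fun h => hyx h.symm), zero_add]
        exact ((KLAux.isVPol_iff _).mp (hf' yy)).sub (hcrest yy hyx).1
    exact sub_eq_zero.mp key
end
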